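/- arXiv:1109.1082 — 11 statements merged into one kernel-verified Lean document; each statement's English description precedes it below -/
import Mathlib

section
/- Every improper weighted simple game on n voters has strictly more than 2^{n-1} winning coalitions. Equivalently, every weighted simple game on n voters with at most 2^{n-1} winning coalitions is proper. -/
/-- A simple game on `n` voters. -/
def IsSimpleGame (n : ℕ) (W : Finset (Finset (Fin n))) : Prop :=
  Finset.univ ∈ W ∧ ∅ ∉ W ∧ ∀ S ∈ W, ∀ R : Finset (Fin n), S ⊆ R → R ∈ W

/-- A weighted simple game. -/
def IsWeighted (n : ℕ) (W : Finset (Finset (Fin n))) : Prop :=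
  ∃ (q : ℝ) (w : Fin n → ℝ), (∀ i, 0 ≤ w i) ∧ 0 < q ∧ q ≤ ∑ i, w i ∧
    ∀ A : Finset (Fin n), A ∈ W ↔ q ≤ ∑ i ∈ A, w i

/-- Every improper weighted simple game on `n` voters has strictly more than
`2^(n-1)` winning coalitions. -/
theorem improper_weighted_card_gt
    (n : ℕ) (W : Finset (Finset (Fin n)))
    (hSG : IsSimpleGame n W) (hwtd : IsWeighted n W)
    (himproper : ∃ A : Finset (Fin n), A ∈ W ∧ Aᶜ ∈ W) :
    2 ^ (n - 1) < W.card := by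
  obtain ⟨q, w, hw0, hq0, hqT, hmem⟩ := hwtd
  obtain ⟨A, hA, hAc⟩ := himproper
  obtain ⟨huniv, hempty, _⟩ := hSG
  -- n ≥ 1
  have hn : 1 ≤ n := by
    by_contra h
    push_neg at h
    interval_cases n
    exact hempty (by simpa using huniv)
  -- total weight ≥ 2q
  have hsplit : ∀ B : Finset (Fin n), (∑ i ∈ B, w i) + ∑ i ∈ Bᶜ, w i = ∑ i, w i := by
    intro B
    exact Finset.sum_add_sum_compl B w
  have h2q : 2 * q ≤ ∑ i, w i := by
    have h1 := (hmem A).1 hA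
    have h2 := (hmem Aᶜ).1 hAc
    have := hsplit A
    linarith
  -- every losing set's complement is winning
  have hkey : ∀ B : Finset (Fin n), B ∉ W → Bᶜ ∈ W := by
    intro B hB
    have h1 : ¬ q ≤ ∑ i ∈ B, w i := fun h => hB ((hmem B).2 h)
    push_neg at h1
    refine (hmem Bᶜ).2 ?_
    have := hsplit B
    linarith
  have hAne : A ≠ Aᶜ := by
    intro h
    have hi : (⟨0, hn⟩ : Fin n) ∈ A ∨ (⟨0, hn⟩ : Fin n) ∈ Aᶜ := by
      by_cases hc : (⟨0, hn⟩ : Fin n) ∈ A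
      · exact Or.inl hc
      · exact Or.inr (Finset.mem_compl.2 hc)
    rcases hi with h1 | h1
    · exact (Finset.mem_compl.1 (h ▸ h1)) (h ▸ (h ▸ h1))
    · have h2 : (⟨0, hn⟩ : Fin n) ∈ A := h ▸ h1
      exact (Finset.mem_compl.1 h1) h2
  -- injection from losing sets into W \ {A, Aᶜ}
  have hinj : ((Finset.univ : Finset (Finset (Fin n))) \ W).card ≤
      (W \ {A, Aᶜ}).card := by
    apply Finset.card_le_card_of_injOn (fun B => Bᶜ)
    · intro B hB
      simp only [Finset.mem_coe, Finset.mem_sdiff, Finset.mem_univ, true_and] at hB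
      simp only [Finset.mem_coe, Finset.mem_sdiff, Finset.mem_insert, Finset.mem_singleton]
      refine ⟨hkey B hB, ?_⟩
      rintro (h | h)
      · exact hB (by rw [← compl_compl B, h]; exact hAc)
      · exact hB (by have : B = A := by rw [← compl_compl B, h, compl_compl]
                     rw [this]; exact hA)
    · intro B _ C _ h
      exact compl_injective h
  have hsub : W ⊆ Finset.univ := Finset.subset_univ W
  have hcardU : (Finset.univ : Finset (Finset (Fin n))).card = 2 ^ n := by
    simp [Finset.card_univ, Fintype.card_finset]
  have hAm : A ∈ W := hA
  have hpair : ({A, Aᶜ} : Finset (Finset (Fin n))) ⊆ W := by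
    intro x hx
    rcases Finset.mem_insert.1 hx with h | h
    · exact h ▸ hA
    · exact (Finset.mem_singleton.1 h) ▸ hAc
  have hpaircard : ({A, Aᶜ} : Finset (Finset (Fin n))).card = 2 := by
    rw [Finset.card_insert_of_notMem (by simpa using hAne), Finset.card_singleton]
  rw [Finset.card_sdiff_of_subset hsub, Finset.card_sdiff_of_subset hpair, hcardU, hpaircard] at hinj
  have hWle : W.card ≤ 2 ^ n := hcardU ▸ Finset.card_le_card hsub
  have h2 : 2 ≤ W.card := hpaircard ▸ Finset.card_le_card hpair
  have hpow : 2 ^ n = 2 * 2 ^ (n - 1) := by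
    rw [← pow_succ']
    congr 1
    omega
  omega
end

section
/- For every n ≥ 1 and every integer r with 1 ≤ r ≤ 2^n − 1, there exists a weighted simple game on n voters having exactly r losing coalitions (equivalently exactly 2^n − r winning coalitions, where losing coalitions are counted among all 2^n subsets of N, including ∅). Moreover, if r ≥ 2^{n-1}, such a game can be chosen to be proper. (One construction: give voter i weight 2^{i-1} and use quota r.) -/
namespace WeightedGameAux

variable {n : ℕ}

/-- Binary encoding of a subset of `Fin n`. -/
def f (A : Finset (Fin n)) : ℕ := ∑ i ∈ A, 2 ^ (i : ℕ)

lemma f_injective : Function.Injective (f (n := n)) := by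
  intro A B h
  have : (A.map Fin.valEmbedding) = (B.map Fin.valEmbedding) := by
    apply Finset.geomSum_injective (n := 2) le_rfl
    simpa [f, Finset.sum_map, Fin.valEmbedding] using h
  ext i
  constructor <;> intro hi
  · have : (i : ℕ) ∈ B.map Fin.valEmbedding := this ▸ Finset.mem_map_of_mem _ hi
    obtain ⟨a, ha, hai⟩ := Finset.mem_map.1 this
    rwa [show a = i from Fin.val_injective hai] at ha
  · have : (i : ℕ) ∈ A.map Fin.valEmbedding := this ▸ Finset.mem_map_of_mem _ hi
    obtain ⟨a, ha, hai⟩ := Finset.mem_map.1 this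
    rwa [show a = i from Fin.val_injective hai] at ha

lemma f_univ : f (Finset.univ : Finset (Fin n)) = 2 ^ n - 1 := by
  have : f (Finset.univ : Finset (Fin n)) = ∑ i ∈ Finset.range n, 2 ^ i := by
    rw [f, Fin.sum_univ_eq_sum_range]
  rw [this, Nat.geomSum_eq le_rfl]
  simp

lemma f_mono {A B : Finset (Fin n)} (h : A ⊆ B) : f A ≤ f B :=
  Finset.sum_le_sum_of_subset h

lemma f_lt (A : Finset (Fin n)) : f A < 2 ^ n :=
  lt_of_le_of_lt (f_mono (Finset.subset_univ A))
    (by rw [f_univ]; exact Nat.sub_lt (Nat.pow_pos two_pos) one_pos)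

/-- For `m < 2^n`, the subset of `Fin n` encoding `m`. -/
def g (m : ℕ) (hm : m < 2 ^ n) : Finset (Fin n) :=
  (m.bitIndices.toFinset).attachFin (by
    intro a ha
    rw [List.mem_toFinset] at ha
    by_contra hle
    push_neg at hle
    exact absurd (le_trans (Nat.pow_le_pow_right two_pos hle)
      (Nat.two_pow_le_of_mem_bitIndices ha)) (Nat.not_le.2 hm))

lemma lt_of_mem_bitIndices {m a : ℕ} (hm : m < 2 ^ n) (ha : a ∈ m.bitIndices.toFinset) :
    a < n := by
  rw [List.mem_toFinset] at ha
  by_contra hle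
  push_neg at hle
  exact absurd (le_trans (Nat.pow_le_pow_right two_pos hle)
    (Nat.two_pow_le_of_mem_bitIndices ha)) (Nat.not_le.2 hm)

lemma map_g (m : ℕ) (hm : m < 2 ^ n) :
    (g m hm).map Fin.valEmbedding = m.bitIndices.toFinset := by
  ext a
  simp only [Finset.mem_map, g, Finset.mem_attachFin, Fin.valEmbedding_apply]
  constructor
  · rintro ⟨i, hi, rfl⟩; exact hi
  · intro ha; exact ⟨⟨a, lt_of_mem_bitIndices hm ha⟩, ha, rfl⟩

lemma f_g (m : ℕ) (hm : m < 2 ^ n) : f (g m hm) = m := by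
  have : f (g m hm) = ∑ a ∈ (g m hm).map Fin.valEmbedding, 2 ^ a := by
    rw [Finset.sum_map]; rfl
  rw [this, map_g, Finset.twoPowSum_toFinset_bitIndices]

end WeightedGameAux

/-- For every `n ≥ 1` and `1 ≤ r ≤ 2^n - 1` there exists a weighted simple game
on `n` voters with exactly `r` losing coalitions (i.e. `2^n - r` winning coalitions,
among all `2^n` subsets), which can moreover be chosen proper when `r ≥ 2^(n-1)`. -/
theorem exists_weighted_game_of_each_rank
    (n r : ℕ) (hn : 1 ≤ n) (hr1 : 1 ≤ r) (hr2 : r ≤ 2 ^ n - 1) :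
    ∃ W : Finset (Finset (Fin n)), IsSimpleGame n W ∧ IsWeighted n W ∧
      W.card = 2 ^ n - r ∧
      (2 ^ (n - 1) ≤ r → ∀ A ∈ W, Aᶜ ∉ W) := by
  classical
  open WeightedGameAux in
  set W : Finset (Finset (Fin n)) :=
    Finset.univ.filter (fun A => r ≤ WeightedGameAux.f A) with hW
  have hmem : ∀ A : Finset (Fin n), A ∈ W ↔ r ≤ WeightedGameAux.f A := by
    intro A; simp [hW]
  have hrlt : r < 2 ^ n :=
    lt_of_le_of_lt hr2 (Nat.sub_lt (Nat.pow_pos two_pos) one_pos)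
  refine ⟨W, ⟨?_, ?_, ?_⟩, ?_, ?_, ?_⟩
  · rw [hmem, WeightedGameAux.f_univ]; exact hr2
  · rw [hmem]
    intro h
    have : WeightedGameAux.f (∅ : Finset (Fin n)) = 0 := Finset.sum_empty
    omega
  · intro S hS R hSR
    rw [hmem] at hS ⊢
    exact le_trans hS (WeightedGameAux.f_mono hSR)
  · refine ⟨(r : ℝ), fun i => ((2 : ℝ) ^ (i : ℕ)), fun i => by positivity, by
      exact_mod_cast Nat.lt_of_lt_of_le one_pos hr1, ?_, ?_⟩
    · have : ∑ i : Fin n, ((2 : ℝ) ^ (i : ℕ)) =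
          ((WeightedGameAux.f (Finset.univ : Finset (Fin n)) : ℕ) : ℝ) := by
        rw [WeightedGameAux.f]; push_cast; ring_nf
      rw [this]
      rw [WeightedGameAux.f_univ]
      exact_mod_cast le_trans hr2 le_rfl
    · intro A
      rw [hmem]
      have : ∑ i ∈ A, ((2 : ℝ) ^ (i : ℕ)) = ((WeightedGameAux.f A : ℕ) : ℝ) := by
        rw [WeightedGameAux.f]; push_cast; ring_nf
      rw [this, Nat.cast_le]
  · -- cardinality
    have htotal : W.card +
        (Finset.univ.filter (fun A : Finset (Fin n) => ¬ r ≤ WeightedGameAux.f A)).card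
        = 2 ^ n := by
      rw [hW, Finset.card_filter_add_card_filter_not, Finset.card_univ]
      simp [Fintype.card_finset]
    have hL : (Finset.univ.filter
        (fun A : Finset (Fin n) => ¬ r ≤ WeightedGameAux.f A)).card = r := by
      have key : (Finset.univ.filter
          (fun A : Finset (Fin n) => ¬ r ≤ WeightedGameAux.f A)).card
          = (Finset.range r).card := by
        refine Finset.card_bij' (fun A _ => WeightedGameAux.f A)
          (fun m hm => WeightedGameAux.g m (lt_trans (Finset.mem_range.1 hm) hrlt))
          ?_ ?_ ?_ ?_
        · intro A hA
          simp only [Finset.mem_filter, not_le] at hA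
          exact Finset.mem_range.2 hA.2
        · intro m hm
          simp only [Finset.mem_filter, Finset.mem_univ, true_and, not_le,
            WeightedGameAux.f_g]
          exact Finset.mem_range.1 hm
        · intro A hA
          exact WeightedGameAux.f_injective (WeightedGameAux.f_g _ _)
        · intro m hm
          exact WeightedGameAux.f_g _ _
      rw [Finset.card_range] at key; exact key
    omega
  · intro hhalf A hA hAc
    rw [hmem] at hA hAc
    have hsum : WeightedGameAux.f A + WeightedGameAux.f Aᶜ
        = WeightedGameAux.f (Finset.univ : Finset (Fin n)) :=
      Finset.sum_add_sum_compl A _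
    rw [WeightedGameAux.f_univ] at hsum
    have h2 : 2 ^ n = 2 ^ (n - 1) * 2 := by
      rw [← pow_succ]; congr 1; omega
    omega
end

section
/- Let A ⊆ N = {1,…,n} and let A^c = N ∖ A. Then A^c ⪰ A fails in the coalition ordering if and only if there exists k with 1 ≤ k and n − 2k + 2 ≥ 1 such that |A ∩ {n−2k+2, n−2k+3, …, n}| ≥ k, i.e., A contains at least k of the largest 2k−1 elements of N. (Equivalently, the principal filter generated by A is a proper linear game exactly under this condition.) -/
/-- The coalition ordering: `B ⪰ A` iff `|B ∩ {k,…,n}| ≥ |A ∩ {k,…,n}|` for every `k`.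
(Voters `1,…,n` are represented by `Fin n`, voter `v` corresponding to index `v - 1`.) -/
def CoalGE (n : ℕ) (B A : Finset (Fin n)) : Prop :=
  ∀ k : Fin n, (A.filter (fun i => k ≤ i)).card ≤ (B.filter (fun i => k ≤ i)).card

private lemma card_univ_ge (n t : ℕ) :
    ((Finset.univ : Finset (Fin n)).filter (fun i => t ≤ i.val)).card = n - t := by
  rcases lt_or_ge t n with h | h
  · have he : (Finset.univ.filter (fun i : Fin n => t ≤ i.val))
        = Finset.Ici (⟨t, h⟩ : Fin n) := by
      ext i
      simp [Fin.le_def]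
    rw [he, Fin.card_Ici]
  · have he : (Finset.univ.filter (fun i : Fin n => t ≤ i.val)) = ∅ := by
      ext i
      simp only [Finset.mem_filter, Finset.mem_univ, true_and, Finset.notMem_empty, iff_false]
      omega
    rw [he]
    simp only [Finset.card_empty]
    omega

private lemma card_compl_ge (n t : ℕ) (A : Finset (Fin n)) :
    (Aᶜ.filter (fun i => t ≤ i.val)).card + (A.filter (fun i => t ≤ i.val)).card = n - t := by
  rw [← card_univ_ge n t, ← Finset.card_union_of_disjoint, ← Finset.filter_union]
  · congr 1
    ext i
    simp [em']
  · exact Finset.disjoint_filter_filter (disjoint_compl_left)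

private lemma c_mono (n : ℕ) (A : Finset (Fin n)) {t s : ℕ} (h : t ≤ s) :
    (A.filter (fun i => s ≤ i.val)).card ≤ (A.filter (fun i => t ≤ i.val)).card := by
  apply Finset.card_le_card
  apply Finset.monotone_filter_right
  intro i hi
  omega

private lemma c_one (n : ℕ) (A : Finset (Fin n)) :
    A.card ≤ (A.filter (fun i => 1 ≤ i.val)).card + 1 := by
  have h := Finset.card_filter_add_card_filter_not
    (s := A) (p := fun i => 1 ≤ i.val)
  have h1 : (A.filter (fun i => ¬ 1 ≤ i.val)).card ≤ 1 := by
    apply Finset.card_le_one.mpr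
    intro a ha b hb
    simp only [Finset.mem_filter] at ha hb
    apply Fin.ext
    omega
  omega

/-- `Aᶜ ⪰ A` fails in the coalition ordering if and only if there is some `k ≥ 1` with
`2k - 1 ≤ n` such that `A` contains at least `k` of the largest `2k - 1` voters,
i.e. at least `k` voters among `{n-2k+2, …, n}` (indices `≥ n+1-2k` in `Fin n`). -/
theorem compl_not_ge_iff_majority_prefix
    (n : ℕ) (A : Finset (Fin n)) :
    ¬ CoalGE n Aᶜ A ↔
      ∃ k : ℕ, 1 ≤ k ∧ 2 * k ≤ n + 1 ∧
        k ≤ (A.filter (fun i => n + 1 - 2 * k ≤ i.val)).card := by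
  constructor
  · intro h
    simp only [CoalGE, not_forall, not_le] at h
    obtain ⟨k, hk⟩ := h
    simp only [Fin.le_def] at hk
    have hcompl := card_compl_ge n k.val A
    have hlt : k.val < n := k.isLt
    rcases Nat.eq_zero_or_pos k.val with h0 | hpos
    · -- k = 0 case
      rw [h0] at hk hcompl
      rcases Nat.even_or_odd n with ⟨s, hs⟩ | ⟨s, hs⟩
      · -- n = 2s even, use m = s, threshold 1
        refine ⟨s, by omega, by omega, ?_⟩
        have h1 := c_one n A
        have h2 : (A.filter (fun i => (0 : ℕ) ≤ i.val)).card = A.card := by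
          congr 1
          apply Finset.filter_true_of_mem
          intro i _
          omega
        have ht : n + 1 - 2 * s = 1 := by omega
        rw [ht]
        omega
      · -- n = 2s+1 odd, use m = s+1, threshold 0
        refine ⟨s + 1, by omega, by omega, ?_⟩
        have ht : n + 1 - 2 * (s + 1) = 0 := by omega
        rw [ht]
        omega
    · -- k ≥ 1: use m = (n - k)/2 + 1
      set m := (n - k.val) / 2 + 1 with hm
      refine ⟨m, by omega, by omega, ?_⟩
      have hmono := c_mono n A (t := n + 1 - 2 * m) (s := k.val) (by omega)
      omega
  · rintro ⟨m, hm1, hm2, hm3⟩ hGE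
    have hlt : n + 1 - 2 * m < n := by omega
    have hk := hGE ⟨n + 1 - 2 * m, hlt⟩
    simp only [Fin.le_def] at hk
    have hcompl := card_compl_ge n (n + 1 - 2 * m) A
    omega
end

section
/- For n ≥ 1, the number of subsets A ⊆ N = {1,…,n} such that A^c = N∖A does NOT satisfy A^c ⪰ A in the coalition ordering equals 2^n − C(n, ⌊n/2⌋). Equivalently, the number of subsets A with A^c ⪰ A equals the central binomial coefficient C(n, ⌊n/2⌋). (This counts the proper linear games on n voters generated by exactly one shift-minimal winning coalition.) -/
open scoped Classical

open Finset

/-- Closed form: sum of a centered band of binomial coefficients. -/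
noncomputable def coalS (n j : ℕ) : ℕ := ∑ t ∈ Finset.Icc ((n - j) / 2) ((n + j) / 2), n.choose t

/-- Path-type condition with slack `j`. -/
def coalCond (n j : ℕ) (A : Finset (Fin n)) : Prop :=
  ∀ k : Fin n, 2 * (A.filter fun i => k ≤ i).card ≤ (n - (k : ℕ)) + j

noncomputable def coalD (n j : ℕ) : ℕ :=
  ((Finset.univ : Finset (Finset (Fin n))).filter (coalCond n j)).card

lemma coalS_zero (j : ℕ) : coalS 0 j = 1 := by
  unfold coalS
  rw [Finset.sum_eq_single 0]
  · simp
  · intro t ht hne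
    exact Nat.choose_eq_zero_of_lt (Nat.pos_of_ne_zero hne)
  · intro h
    exact absurd (Finset.mem_Icc.mpr ⟨by omega, by omega⟩) h

lemma pascal_sum_shift (n a b : ℕ) :
    ∑ t ∈ Finset.Icc (a + 1) (b + 1), (n + 1).choose t
      = ∑ t ∈ Finset.Icc (a + 1) (b + 1), n.choose t + ∑ t ∈ Finset.Icc a b, n.choose t := by
  have h : ∀ m : ℕ, ∑ t ∈ Finset.Icc (a + 1) (b + 1), m.choose t
      = ∑ t ∈ Finset.Icc a b, m.choose (t + 1) := by
    intro m
    rw [← Finset.map_add_right_Icc a b 1, Finset.sum_map]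
    rfl
  rw [h, h, ← Finset.sum_add_distrib]
  refine Finset.sum_congr rfl fun t _ => ?_
  rw [Nat.choose_succ_succ']
  omega

lemma pascal_sum_zero (n b : ℕ) :
    ∑ t ∈ Finset.Icc 0 (b + 1), (n + 1).choose t
      = ∑ t ∈ Finset.Icc 0 (b + 1), n.choose t + ∑ t ∈ Finset.Icc 0 b, n.choose t := by
  have h1 : ∀ (m : ℕ), ∑ t ∈ Finset.Icc 0 (b + 1), m.choose t
      = 1 + ∑ t ∈ Finset.Icc 1 (b + 1), m.choose t := by
    intro m
    rw [Finset.Icc_eq_cons_Ioc (by omega), Finset.sum_cons]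
    rw [show Finset.Ioc 0 (b + 1) = Finset.Icc 1 (b + 1) from (Finset.Icc_add_one_left_eq_Ioc 0 (b+1)).symm,
      Nat.choose_zero_right]
  have hs := pascal_sum_shift n 0 b
  norm_num at hs
  rw [h1, h1, hs]
  omega

lemma coalS_succ_zero (n : ℕ) : coalS (n + 1) 0 = coalS n 1 := by
  unfold coalS
  simp only [Nat.add_zero, Nat.sub_zero]
  rcases n with _ | m
  · norm_num
  · have e3 : (m + 1 - 1) / 2 = m / 2 := by omega
    have e4 : (m + 1 + 1) / 2 = m / 2 + 1 := by omega
    rw [e3, e4, Finset.Icc_self, Finset.sum_singleton,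
      Finset.sum_Icc_succ_top (Nat.le_succ _), Finset.Icc_self, Finset.sum_singleton,
      Nat.choose_succ_succ']

lemma coalS_succ_succ (n j : ℕ) : coalS (n + 1) (j + 1) = coalS n j + coalS n (j + 2) := by
  unfold coalS
  rcases le_or_gt (j + 2) n with h | h
  · have e1 : (n + 1 - (j + 1)) / 2 = (n - j - 2) / 2 + 1 := by omega
    have e2 : (n + 1 + (j + 1)) / 2 = (n + j) / 2 + 1 := by omega
    have e3 : (n - j) / 2 = (n - j - 2) / 2 + 1 := by omega
    have e4 : (n + (j + 2)) / 2 = (n + j) / 2 + 1 := by omega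
    have e5 : (n - (j + 2)) / 2 = (n - j - 2) / 2 := by omega
    rw [e1, e2, e3, e4, e5, pascal_sum_shift,
      Finset.sum_Icc_succ_top (show (n - j - 2) / 2 + 1 ≤ (n + j) / 2 + 1 by omega),
      Finset.sum_Icc_succ_top (show (n - j - 2) / 2 ≤ (n + j) / 2 + 1 by omega)]
    omega
  · have e1 : (n + 1 - (j + 1)) / 2 = 0 := by omega
    have e2 : (n - j) / 2 = 0 := by omega
    have e3 : (n - (j + 2)) / 2 = 0 := by omega
    have e4 : (n + (j + 2)) / 2 = (n + j) / 2 + 1 := by omega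
    have e5 : (n + 1 + (j + 1)) / 2 = (n + j) / 2 + 1 := by omega
    rw [e1, e2, e3, e4, e5, pascal_sum_zero]
    omega

lemma coalS_closed (n : ℕ) : coalS n 0 = n.choose (n / 2) := by
  unfold coalS
  rw [show (n - 0) / 2 = n / 2 by omega, show (n + 0) / 2 = n / 2 by omega,
    Finset.Icc_self, Finset.sum_singleton]

/-- `Fin.castSucc` as an embedding. -/
def coalEmb (n : ℕ) : Fin n ↪ Fin (n + 1) := ⟨Fin.castSucc, Fin.castSucc_injective n⟩

lemma coal_count_map (n : ℕ) (B : Finset (Fin n)) (k : Fin n) :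
    ((B.map (coalEmb n)).filter fun i => k.castSucc ≤ i).card
      = (B.filter fun i => k ≤ i).card := by
  rw [Finset.filter_map, Finset.card_map]
  refine Finset.card_nbij' id id ?_ ?_ (fun _ _ => rfl) (fun _ _ => rfl)
  · intro a ha
    simp only [Finset.mem_coe, Finset.mem_filter, Function.comp, Function.comp_def, coalEmb, Function.Embedding.coeFn_mk,
      Fin.castSucc_le_castSucc_iff, id] at ha ⊢
    exact ha
  · intro a ha
    simp only [Finset.mem_coe, Finset.mem_filter, Function.comp, Function.comp_def, coalEmb, Function.Embedding.coeFn_mk,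
      Fin.castSucc_le_castSucc_iff, id] at ha ⊢
    exact ha

lemma coal_last_not_mem (n : ℕ) (B : Finset (Fin n)) : Fin.last n ∉ B.map (coalEmb n) := by
  simp only [Finset.mem_map, coalEmb, Function.Embedding.coeFn_mk]
  rintro ⟨b, _, hb⟩
  exact absurd hb (Fin.castSucc_lt_last b).ne

lemma coal_cond_map (n j : ℕ) (B : Finset (Fin n)) :
    coalCond (n + 1) j (B.map (coalEmb n)) ↔ coalCond n (j + 1) B := by
  constructor
  · intro h k
    have hk := h k.castSucc
    rw [coal_count_map] at hk
    have hlt : (k : ℕ) < n := k.isLt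
    have hv : ((k.castSucc : Fin (n + 1)) : ℕ) = (k : ℕ) := rfl
    omega
  · intro h k
    refine Fin.lastCases ?_ (fun k' => ?_) k
    · have h0 : ((B.map (coalEmb n)).filter fun i => Fin.last n ≤ i) = ∅ := by
        refine Finset.filter_false_of_mem fun i hi hle => ?_
        exact coal_last_not_mem n B ((Fin.last_le_iff.mp hle) ▸ hi)
      rw [h0]
      simp
    · have hk := h k'
      rw [← coal_count_map n B k'] at hk
      have hlt : (k' : ℕ) < n := k'.isLt
      have hv : ((k'.castSucc : Fin (n + 1)) : ℕ) = (k' : ℕ) := rfl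
      omega

lemma coal_cond_insert (n j : ℕ) (B : Finset (Fin n)) :
    coalCond (n + 1) (j + 1) (insert (Fin.last n) (B.map (coalEmb n))) ↔ coalCond n j B := by
  have hcount : ∀ k : Fin n,
      ((insert (Fin.last n) (B.map (coalEmb n))).filter fun i => k.castSucc ≤ i).card
        = (B.filter fun i => k ≤ i).card + 1 := by
    intro k
    rw [Finset.filter_insert, if_pos (Fin.le_last _), Finset.card_insert_of_notMem
      (fun hmem => coal_last_not_mem n B (Finset.mem_filter.mp hmem).1), coal_count_map]
  have hlastcount :
      ((insert (Fin.last n) (B.map (coalEmb n))).filter fun i => Fin.last n ≤ i).card = 1 := by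
    rw [Finset.filter_insert, if_pos le_rfl]
    have h0 : ((B.map (coalEmb n)).filter fun i => Fin.last n ≤ i) = ∅ := by
      refine Finset.filter_false_of_mem fun i hi hle => ?_
      exact coal_last_not_mem n B ((Fin.last_le_iff.mp hle) ▸ hi)
    rw [h0]
    simp
  constructor
  · intro h k
    have hk := h k.castSucc
    rw [hcount] at hk
    have hlt : (k : ℕ) < n := k.isLt
    have hv : ((k.castSucc : Fin (n + 1)) : ℕ) = (k : ℕ) := rfl
    omega
  · intro h k
    refine Fin.lastCases ?_ (fun k' => ?_) k
    · rw [hlastcount]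
      have : ((Fin.last n : Fin (n + 1)) : ℕ) = n := Fin.val_last n
      omega
    · have hk := h k'
      rw [hcount]
      have hlt : (k' : ℕ) < n := k'.isLt
      have hv : ((k'.castSucc : Fin (n + 1)) : ℕ) = (k' : ℕ) := rfl
      omega

lemma coal_cond_zero_not_last (n : ℕ) (A : Finset (Fin (n + 1)))
    (h : coalCond (n + 1) 0 A) : Fin.last n ∉ A := by
  intro hmem
  have hk := h (Fin.last n)
  have h1 : Fin.last n ∈ A.filter fun i => Fin.last n ≤ i :=
    Finset.mem_filter.mpr ⟨hmem, le_rfl⟩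
  have h2 : 1 ≤ (A.filter fun i => Fin.last n ≤ i).card :=
    Finset.card_pos.mpr ⟨_, h1⟩
  have h3 : ((Fin.last n : Fin (n + 1)) : ℕ) = n := Fin.val_last n
  omega

lemma coal_map_preimage {n : ℕ} {A : Finset (Fin (n + 1))} (h : Fin.last n ∉ A) :
    (A.preimage Fin.castSucc (Fin.castSucc_injective n).injOn).map (coalEmb n) = A := by
  ext i
  simp only [Finset.mem_map, Finset.mem_preimage, coalEmb, Function.Embedding.coeFn_mk]
  constructor
  · rintro ⟨b, hb, rfl⟩
    exact hb
  · intro hi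
    obtain ⟨b, rfl⟩ := Fin.exists_castSucc_eq.mpr (fun he => h (he ▸ hi))
    exact ⟨b, hi, rfl⟩

lemma coal_preimage_map {n : ℕ} (B : Finset (Fin n)) :
    (B.map (coalEmb n)).preimage Fin.castSucc (Fin.castSucc_injective n).injOn = B := by
  ext b
  simp only [Finset.mem_preimage, Finset.mem_map, coalEmb, Function.Embedding.coeFn_mk]
  constructor
  · rintro ⟨a, ha, hab⟩
    rwa [Fin.castSucc_injective n hab] at ha
  · intro hb
    exact ⟨b, hb, rfl⟩

lemma coal_card_not_last (n j : ℕ) :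
    ((Finset.univ : Finset (Finset (Fin (n + 1)))).filter
        (fun A => coalCond (n + 1) j A ∧ Fin.last n ∉ A)).card = coalD n (j + 1) := by
  unfold coalD
  refine Finset.card_nbij'
    (fun A => A.preimage Fin.castSucc (Fin.castSucc_injective n).injOn)
    (fun B => B.map (coalEmb n)) ?_ ?_ ?_ ?_
  · intro A hA
    simp only [Finset.mem_coe, Finset.mem_filter, Finset.mem_univ, true_and] at hA ⊢
    rw [← coal_cond_map n j, coal_map_preimage hA.2]
    exact hA.1
  · intro B hB
    simp only [Finset.mem_coe, Finset.mem_filter, Finset.mem_univ, true_and] at hB ⊢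
    exact ⟨(coal_cond_map n j B).mpr hB, coal_last_not_mem n B⟩
  · intro A hA
    simp only [Finset.mem_coe, Finset.mem_filter, Finset.mem_univ, true_and] at hA
    exact coal_map_preimage hA.2
  · intro B _
    exact coal_preimage_map B

lemma coal_card_last (n j : ℕ) :
    ((Finset.univ : Finset (Finset (Fin (n + 1)))).filter
        (fun A => coalCond (n + 1) (j + 1) A ∧ Fin.last n ∈ A)).card = coalD n j := by
  unfold coalD
  refine Finset.card_nbij'
    (fun A => (A.erase (Fin.last n)).preimage Fin.castSucc (Fin.castSucc_injective n).injOn)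
    (fun B => insert (Fin.last n) (B.map (coalEmb n))) ?_ ?_ ?_ ?_
  · intro A hA
    simp only [Finset.mem_coe, Finset.mem_filter, Finset.mem_univ, true_and] at hA ⊢
    rw [← coal_cond_insert n j, coal_map_preimage (Finset.notMem_erase _ _),
      Finset.insert_erase hA.2]
    exact hA.1
  · intro B hB
    simp only [Finset.mem_coe, Finset.mem_filter, Finset.mem_univ, true_and] at hB ⊢
    exact ⟨(coal_cond_insert n j B).mpr hB, Finset.mem_insert_self _ _⟩
  · intro A hA
    simp only [Finset.mem_coe, Finset.mem_filter, Finset.mem_univ, true_and] at hA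
    dsimp only
    rw [coal_map_preimage (Finset.notMem_erase _ _), Finset.insert_erase hA.2]
  · intro B _
    dsimp only
    rw [Finset.erase_insert (coal_last_not_mem n B), coal_preimage_map]

lemma coalD_zero (j : ℕ) : coalD 0 j = 1 := by
  unfold coalD
  rw [Finset.filter_true_of_mem (fun A _ k => k.elim0)]
  simp

lemma coalD_succ_zero (n : ℕ) : coalD (n + 1) 0 = coalD n 1 := by
  rw [← coal_card_not_last n 0]
  unfold coalD
  congr 1
  apply Finset.filter_congr
  intro A _
  exact ⟨fun h => ⟨h, coal_cond_zero_not_last n A h⟩, fun h => h.1⟩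

lemma coalD_succ_succ (n j : ℕ) : coalD (n + 1) (j + 1) = coalD n j + coalD n (j + 2) := by
  have hsplit := Finset.card_filter_add_card_filter_not
    (s := (Finset.univ : Finset (Finset (Fin (n + 1)))).filter (coalCond (n + 1) (j + 1)))
    (p := fun A => Fin.last n ∈ A)
  rw [Finset.filter_filter, Finset.filter_filter] at hsplit
  have h1 : ((Finset.univ : Finset (Finset (Fin (n + 1)))).filter
      (fun A => coalCond (n + 1) (j + 1) A ∧ Fin.last n ∈ A)).card = coalD n j :=
    coal_card_last n j
  have h2 : ((Finset.univ : Finset (Finset (Fin (n + 1)))).filter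
      (fun A => coalCond (n + 1) (j + 1) A ∧ ¬ Fin.last n ∈ A)).card = coalD n (j + 2) :=
    coal_card_not_last n (j + 1)
  unfold coalD at *
  omega

lemma coalD_eq_coalS (n : ℕ) : ∀ j, coalD n j = coalS n j := by
  induction n with
  | zero => intro j; rw [coalD_zero, coalS_zero]
  | succ n ih =>
    intro j
    cases j with
    | zero => rw [coalD_succ_zero, coalS_succ_zero, ih]
    | succ j => rw [coalD_succ_succ, coalS_succ_succ, ih, ih]

lemma coalGE_iff (n : ℕ) (A : Finset (Fin n)) : CoalGE n Aᶜ A ↔ coalCond n 0 A := by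
  unfold CoalGE coalCond
  apply forall_congr'
  intro k
  have hsub : (A.filter fun i => k ≤ i) ⊆ Finset.univ.filter fun i => k ≤ i :=
    Finset.filter_subset_filter _ (Finset.subset_univ A)
  have hcompl : (Aᶜ.filter fun i => k ≤ i)
      = (Finset.univ.filter fun i => k ≤ i) \ (A.filter fun i => k ≤ i) := by
    ext i
    simp only [Finset.mem_filter, Finset.mem_compl, Finset.mem_sdiff, Finset.mem_univ, true_and]
    tauto
  have hU : (Finset.univ.filter fun i : Fin n => k ≤ i) = Finset.Ici k := by
    ext i; simp
  have hcard : (Finset.univ.filter fun i : Fin n => k ≤ i).card = n - (k : ℕ) := by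
    rw [hU, Fin.card_Ici]
  have hle : (A.filter fun i => k ≤ i).card ≤ n - (k : ℕ) :=
    hcard ▸ Finset.card_le_card hsub
  rw [hcompl, Finset.card_sdiff_of_subset hsub, hcard]
  omega

open scoped Classical in
/-- For `n ≥ 1`, the number of coalitions `A ⊆ N` whose complement does NOT dominate
them in the coalition ordering is `2^n - C(n, ⌊n/2⌋)`; equivalently, the number with
`Aᶜ ⪰ A` is the central binomial coefficient. This counts the proper linear games
on `n` voters with exactly one shift-minimal winning coalition. -/
theorem card_one_generator_proper_games
    (n : ℕ) (hn : 1 ≤ n) :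
    ((Finset.univ : Finset (Finset (Fin n))).filter
        (fun A => ¬ CoalGE n Aᶜ A)).card = 2 ^ n - n.choose (n / 2) ∧
    ((Finset.univ : Finset (Finset (Fin n))).filter
        (fun A => CoalGE n Aᶜ A)).card = n.choose (n / 2) := by
  have hGE : ((Finset.univ : Finset (Finset (Fin n))).filter
      (fun A => CoalGE n Aᶜ A)).card = n.choose (n / 2) := by
    have h1 : ((Finset.univ : Finset (Finset (Fin n))).filter (fun A => CoalGE n Aᶜ A))
        = (Finset.univ : Finset (Finset (Fin n))).filter (coalCond n 0) :=
      Finset.filter_congr (fun A _ => coalGE_iff n A)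
    rw [h1]
    have h2 : ((Finset.univ : Finset (Finset (Fin n))).filter (coalCond n 0)).card = coalD n 0 :=
      rfl
    rw [h2, coalD_eq_coalS, coalS_closed]
  refine ⟨?_, hGE⟩
  have hsplit := Finset.card_filter_add_card_filter_not
    (s := (Finset.univ : Finset (Finset (Fin n)))) (p := fun A => CoalGE n Aᶜ A)
  have hcard : (Finset.univ : Finset (Finset (Fin n))).card = 2 ^ n := by
    simp [Finset.card_univ]
  omega
end

section
/- If W is a weighted simple game on n voters, then W has a normalized realization (q, w) such that whenever voters i and j are equally desirable in W, their weights are equal: w_i = w_j. -/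
/-- `(q, w)` is a normalized realization of `W`. -/
def IsNormRealization (n : ℕ) (W : Finset (Finset (Fin n))) (q : ℝ) (w : Fin n → ℝ) : Prop :=
  (∀ i, 0 ≤ w i) ∧ (∑ i, w i = 1) ∧ 0 < q ∧ q ≤ 1 ∧
    ∀ A : Finset (Fin n), A ∈ W ↔ q ≤ ∑ i ∈ A, w i

/-- Voters `i` and `j` are equally desirable in `W`. -/
def EquallyDesirable (n : ℕ) (W : Finset (Finset (Fin n))) (i j : Fin n) : Prop :=
  ∀ S : Finset (Fin n), i ∉ S → j ∉ S → (insert i S ∈ W ↔ insert j S ∈ W)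

/-- A permutation is a symmetry of `W` if it preserves winning coalitions. -/
lemma swap_symmetry (n : ℕ) (W : Finset (Finset (Fin n))) (i j : Fin n)
    (hij : EquallyDesirable n W i j) (A : Finset (Fin n)) :
    A.map (Equiv.swap i j).toEmbedding ∈ W ↔ A ∈ W := by
  have hmem : ∀ x : Fin n, x ∈ A.map (Equiv.swap i j).toEmbedding ↔ Equiv.swap i j x ∈ A := by
    intro x
    rw [Finset.mem_map_equiv, Equiv.symm_swap]
  by_cases hi : i ∈ A <;> by_cases hj : j ∈ A
  · -- both in A : map = A
    have : A.map (Equiv.swap i j).toEmbedding = A := by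
      ext x
      rw [hmem x]
      rcases eq_or_ne x i with rfl | hxi
      · simp [hi, hj]
      rcases eq_or_ne x j with rfl | hxj
      · simp [hi, hj]
      · rw [Equiv.swap_apply_of_ne_of_ne hxi hxj]
    rw [this]
  · -- i ∈ A, j ∉ A
    have hne : i ≠ j := fun h => hj (h ▸ hi)
    have hmap : A.map (Equiv.swap i j).toEmbedding = insert j (A.erase i) := by
      ext x
      rw [hmem x]
      rcases eq_or_ne x i with rfl | hxi
      · simp [Equiv.swap_apply_left, hj, hne]
      rcases eq_or_ne x j with rfl | hxj
      · simp [Equiv.swap_apply_right, hi]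
      · rw [Equiv.swap_apply_of_ne_of_ne hxi hxj]
        simp [hxi, hxj]
    have hA : A = insert i (A.erase i) := (Finset.insert_erase hi).symm
    rw [hmap, show A ∈ W ↔ insert i (A.erase i) ∈ W by rw [← hA]]
    exact (hij (A.erase i) (Finset.notMem_erase i A)
      (fun h => hj (Finset.mem_of_mem_erase h))).symm
  · -- j ∈ A, i ∉ A
    have hne : j ≠ i := fun h => hi (h ▸ hj)
    have hmap : A.map (Equiv.swap i j).toEmbedding = insert i (A.erase j) := by
      ext x
      rw [hmem x]
      rcases eq_or_ne x j with rfl | hxj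
      · simp [Equiv.swap_apply_right, hi, hne]
      rcases eq_or_ne x i with rfl | hxi
      · simp [Equiv.swap_apply_left, hj]
      · rw [Equiv.swap_apply_of_ne_of_ne hxi hxj]
        simp [hxi, hxj]
    have hA : A = insert j (A.erase j) := (Finset.insert_erase hj).symm
    rw [hmap, show A ∈ W ↔ insert j (A.erase j) ∈ W by rw [← hA]]
    exact hij (A.erase j) (fun h => hi (Finset.mem_of_mem_erase h))
      (Finset.notMem_erase j A)
  · -- neither in A : map = A
    have : A.map (Equiv.swap i j).toEmbedding = A := by
      ext x
      rw [hmem x]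
      rcases eq_or_ne x i with rfl | hxi
      · simp [Equiv.swap_apply_left, hi, hj]
      rcases eq_or_ne x j with rfl | hxj
      · simp [Equiv.swap_apply_right, hi, hj]
      · rw [Equiv.swap_apply_of_ne_of_ne hxi hxj]
    rw [this]

/-- Every weighted simple game admits a normalized realization in which all equally
desirable voters receive equal weights. -/
theorem exists_realization_equal_weights_on_symmetry_classes
    (n : ℕ) (W : Finset (Finset (Fin n))) (hSG : IsSimpleGame n W)
    (hwtd : ∃ (q : ℝ) (w : Fin n → ℝ), IsNormRealization n W q w) :
    ∃ (q : ℝ) (w : Fin n → ℝ), IsNormRealization n W q w ∧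
      ∀ i j : Fin n, EquallyDesirable n W i j → w i = w j := by
  classical
  obtain ⟨q, w, hw0, hw1, hq0, hq1, hreal⟩ := hwtd
  -- the symmetry group, as a finset
  set G : Finset (Equiv.Perm (Fin n)) :=
    Finset.univ.filter (fun σ => ∀ A : Finset (Fin n), A.map σ.toEmbedding ∈ W ↔ A ∈ W) with hG
  have hmemG : ∀ σ : Equiv.Perm (Fin n),
      σ ∈ G ↔ ∀ A : Finset (Fin n), A.map σ.toEmbedding ∈ W ↔ A ∈ W := by
    intro σ; simp [hG]
  have h1G : (1 : Equiv.Perm (Fin n)) ∈ G := by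
    rw [hmemG]
    intro A
    have : A.map (1 : Equiv.Perm (Fin n)).toEmbedding = A := by
      ext x; simp [Finset.mem_map_equiv, Equiv.Perm.one_symm]
    rw [this]
  have hGne : G.Nonempty := ⟨1, h1G⟩
  have hGcard : (0 : ℝ) < G.card := by
    exact_mod_cast Finset.card_pos.mpr hGne
  -- composition lemma
  have hcomp : ∀ σ τ : Equiv.Perm (Fin n), σ ∈ G → τ ∈ G → σ * τ ∈ G := by
    intro σ τ hσ hτ
    rw [hmemG] at hσ hτ ⊢
    intro A
    have : A.map (σ * τ).toEmbedding = (A.map τ.toEmbedding).map σ.toEmbedding := by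
      ext x
      simp only [Finset.mem_map_equiv]
      rfl
    rw [this, hσ, hτ]
  -- averaged weights
  set w' : Fin n → ℝ := fun i => (∑ σ ∈ G, w (σ i)) / G.card with hw'
  refine ⟨q, w', ⟨?_, ?_, hq0, hq1, ?_⟩, ?_⟩
  · intro i
    apply div_nonneg _ (le_of_lt hGcard)
    exact Finset.sum_nonneg fun σ _ => hw0 _
  · rw [hw']
    rw [← Finset.sum_div]
    rw [Finset.sum_comm]
    have : ∀ σ ∈ G, ∑ i : Fin n, w (σ i) = 1 := by
      intro σ _
      rw [Equiv.sum_comp σ w]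
      exact hw1
    rw [Finset.sum_congr rfl this, Finset.sum_const, nsmul_eq_mul, mul_one,
      div_self (ne_of_gt hGcard)]
  · intro A
    have hsum : ∑ i ∈ A, w' i = (∑ σ ∈ G, ∑ x ∈ A.map σ.toEmbedding, w x) / G.card := by
      rw [hw', ← Finset.sum_div, Finset.sum_comm]
      congr 1
      refine Finset.sum_congr rfl fun σ _ => ?_
      rw [Finset.sum_map]
      rfl
    rw [hsum]
    constructor
    · intro hA
      rw [le_div_iff₀ hGcard]
      calc q * G.card = ∑ _σ ∈ G, q := by rw [Finset.sum_const, nsmul_eq_mul, mul_comm]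
        _ ≤ _ := Finset.sum_le_sum fun σ hσ => by
            exact (hreal _).mp (((hmemG σ).mp hσ A).mpr hA)
    · intro hle
      by_contra hA
      have hstrict : ∑ σ ∈ G, ∑ x ∈ A.map σ.toEmbedding, w x < ∑ _σ ∈ G, q := by
        apply Finset.sum_lt_sum_of_nonempty hGne
        intro σ hσ
        by_contra hc
        push_neg at hc
        exact hA (((hmemG σ).mp hσ A).mp ((hreal _).mpr hc))
      rw [Finset.sum_const, nsmul_eq_mul] at hstrict
      have : (∑ σ ∈ G, ∑ x ∈ A.map σ.toEmbedding, w x) / G.card < q := by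
        rw [div_lt_iff₀ hGcard]
        linarith
      linarith
  · -- equal weights for equally desirable voters
    intro i j hij
    have hτ : Equiv.swap i j ∈ G := (hmemG _).mpr (swap_symmetry n W i j hij)
    have key : (∑ σ ∈ G, w (σ i)) = ∑ σ ∈ G, w (σ j) := by
      refine Finset.sum_nbij' (fun σ => σ * Equiv.swap i j) (fun σ => σ * Equiv.swap i j)
        ?_ ?_ ?_ ?_ ?_
      · intro σ hσ; exact hcomp _ _ hσ hτ
      · intro σ hσ; exact hcomp _ _ hσ hτ
      · intro σ _
        simp only [mul_assoc, Equiv.swap_mul_self, mul_one]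
      · intro σ _
        simp only [mul_assoc, Equiv.swap_mul_self, mul_one]
      · intro σ _
        simp [Equiv.Perm.mul_apply, Equiv.swap_apply_left]
    simp only [hw']
    rw [key]
end

section
/- If W is a weighted simple game on n voters, then W has a normalized realization (q, w) such that for all voters i, j ∈ N: w_i = w_j if and only if i and j are equally desirable in W, and w_i = 0 if and only if i is a dummy in W. (Thus the partition of voters by weight at this realization is exactly the partition into desirability classes, with the dummies being precisely the zero-weight voters.) -/
def IsDummy (n : ℕ) (W : Finset (Finset (Fin n))) (i : Fin n) : Prop :=
  ∀ S : Finset (Fin n), i ∉ S → insert i S ∈ W → S ∈ W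

section Aux
variable {n : ℕ} {W : Finset (Finset (Fin n))}
open scoped Classical

lemma dummy_of_zero {q : ℝ} {w : Fin n → ℝ} (hR : IsNormRealization n W q w)
    {i : Fin n} (h : w i = 0) : IsDummy n W i := by
  intro S hiS hins
  rw [hR.2.2.2.2] at hins ⊢
  rwa [Finset.sum_insert hiS, h, zero_add] at hins

lemma ed_of_eq {q : ℝ} {w : Fin n → ℝ} (hR : IsNormRealization n W q w)
    {i j : Fin n} (h : w i = w j) : EquallyDesirable n W i j := by
  intro S hiS hjS
  rw [hR.2.2.2.2, hR.2.2.2.2, Finset.sum_insert hiS, Finset.sum_insert hjS, h]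

lemma ed_symm {i j : Fin n} (h : EquallyDesirable n W i j) : EquallyDesirable n W j i :=
  fun S hjS hiS => (h S hiS hjS).symm

lemma filter_not_dummy_mem (A : Finset (Fin n)) (hA : A ∈ W) :
    A.filter (fun i => ¬ IsDummy n W i) ∈ W := by
  classical
  induction A using Finset.strongInduction with
  | _ A ih =>
    by_cases hD : ∃ i ∈ A, IsDummy n W i
    · obtain ⟨i, hiA, hid⟩ := hD
      have h1 : A.erase i ∈ W := by
        apply hid
        · exact Finset.notMem_erase i A
        · rwa [Finset.insert_erase hiA]
      have h2 := ih (A.erase i) (Finset.erase_ssubset hiA) h1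
      have h3 : (A.erase i).filter (fun x => ¬ IsDummy n W x)
          = A.filter (fun x => ¬ IsDummy n W x) := by
        rw [Finset.filter_erase, Finset.erase_eq_self.mpr]
        simp [hid]
      rwa [h3] at h2
    · push_neg at hD
      rwa [Finset.filter_true_of_mem hD]

lemma dummy_of_ed {q : ℝ} {w : Fin n → ℝ} (hR : IsNormRealization n W q w)
    (hz : ∀ k, IsDummy n W k → w k = 0) {a b : Fin n}
    (hed : EquallyDesirable n W a b) (ha : IsDummy n W a) : IsDummy n W b := by
  classical
  intro S hbS hbW
  by_cases haS : a ∈ S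
  · have hwa : w a = 0 := hz a ha
    have hbe : b ∉ S.erase a := fun h => hbS (Finset.mem_of_mem_erase h)
    have h1 : insert b (S.erase a) ∈ W := by
      rw [hR.2.2.2.2] at hbW ⊢
      rwa [Finset.sum_insert hbe, Finset.sum_erase _ hwa, ← Finset.sum_insert hbS]
    have h2 : insert a (S.erase a) ∈ W :=
      (hed _ (Finset.notMem_erase _ _) hbe).mpr h1
    have h3 : S.erase a ∈ W := ha _ (Finset.notMem_erase _ _) h2
    rw [hR.2.2.2.2] at h3 ⊢
    rwa [Finset.sum_erase _ hwa] at h3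
  · exact ha S haS ((hed S haS hbS).mpr hbW)

lemma swap_image_mem {i j : Fin n} (h : EquallyDesirable n W i j) (A : Finset (Fin n)) :
    A.image (Equiv.swap i j) ∈ W ↔ A ∈ W := by
  classical
  by_cases hij : i = j
  · subst hij; simp [Equiv.swap_self, Finset.image_id']
  have key : ∀ x, x ∈ A.image (Equiv.swap i j) ↔ Equiv.swap i j x ∈ A := by
    intro x
    simp only [Finset.mem_image]
    constructor
    · rintro ⟨a, ha, rfl⟩; rwa [Equiv.swap_apply_self]
    · intro hx; exact ⟨_, hx, Equiv.swap_apply_self i j x⟩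
  by_cases hiA : i ∈ A <;> by_cases hjA : j ∈ A
  · have him : A.image (Equiv.swap i j) = A := by
      ext x; rw [key]
      by_cases hx1 : x = i
      · subst hx1; simp [Equiv.swap_apply_left, hiA, hjA]
      by_cases hx2 : x = j
      · subst hx2; simp [Equiv.swap_apply_right, hiA, hjA]
      · rw [Equiv.swap_apply_of_ne_of_ne hx1 hx2]
    rw [him]
  · have him : A.image (Equiv.swap i j) = insert j (A.erase i) := by
      ext x; rw [key, Finset.mem_insert, Finset.mem_erase]
      by_cases hx1 : x = i
      · subst hx1; simp [Equiv.swap_apply_left, hjA, hij]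
      by_cases hx2 : x = j
      · subst hx2; simp [Equiv.swap_apply_right, hiA]
      · rw [Equiv.swap_apply_of_ne_of_ne hx1 hx2]
        simp [hx1, hx2]
    rw [him]
    conv_rhs => rw [← Finset.insert_erase hiA]
    exact (h (A.erase i) (Finset.notMem_erase i A)
      (fun hj => hjA (Finset.mem_of_mem_erase hj))).symm
  · have him : A.image (Equiv.swap i j) = insert i (A.erase j) := by
      ext x; rw [key, Finset.mem_insert, Finset.mem_erase]
      by_cases hx1 : x = i
      · subst hx1; simp [Equiv.swap_apply_left, hjA]
      by_cases hx2 : x = j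
      · subst hx2; simp [Equiv.swap_apply_right, hiA, Ne.symm hij]
      · rw [Equiv.swap_apply_of_ne_of_ne hx1 hx2]
        simp [hx1, hx2]
    rw [him]
    conv_rhs => rw [← Finset.insert_erase hjA]
    exact h (A.erase j) (fun hi => hiA (Finset.mem_of_mem_erase hi))
      (Finset.notMem_erase j A)
  · have him : A.image (Equiv.swap i j) = A := by
      ext x; rw [key]
      by_cases hx1 : x = i
      · subst hx1; simp [Equiv.swap_apply_left, hiA, hjA]
      by_cases hx2 : x = j
      · subst hx2; simp [Equiv.swap_apply_right, hiA, hjA]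
      · rw [Equiv.swap_apply_of_ne_of_ne hx1 hx2]
    rw [him]

end Aux

/-- Swaps of equally desirable voters. -/
def SwapSet (n : ℕ) (W : Finset (Finset (Fin n))) : Set (Equiv.Perm (Fin n)) :=
  {σ | ∃ a b, EquallyDesirable n W a b ∧ σ = Equiv.swap a b}

section Aux2
variable {n : ℕ} {W : Finset (Finset (Fin n))}

lemma perm_image_mem {π : Equiv.Perm (Fin n)}
    (hπ : π ∈ Submonoid.closure (SwapSet n W)) :
    ∀ A : Finset (Fin n), A.image π ∈ W ↔ A ∈ W := by
  refine Submonoid.closure_induction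
    (motive := fun (x : Equiv.Perm (Fin n)) _ => ∀ A : Finset (Fin n), A.image ⇑x ∈ W ↔ A ∈ W) ?_ ?_ ?_ hπ
  · rintro σ ⟨a, b, hed, rfl⟩ A
    exact swap_image_mem hed A
  · intro A; simp
  · intro x y hx hy px py A
    have h : A.image ⇑(x * y) = (A.image ⇑y).image ⇑x := by
      rw [Finset.image_image, Equiv.Perm.coe_mul]
    rw [h, px, py]

lemma perm_dummy {q : ℝ} {w : Fin n → ℝ} (hR : IsNormRealization n W q w)
    (hz : ∀ k, IsDummy n W k → w k = 0) {π : Equiv.Perm (Fin n)}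
    (hπ : π ∈ Submonoid.closure (SwapSet n W)) :
    ∀ i : Fin n, IsDummy n W i → IsDummy n W (π i) := by
  refine Submonoid.closure_induction
    (motive := fun (x : Equiv.Perm (Fin n)) _ => ∀ i : Fin n, IsDummy n W i → IsDummy n W (x i)) ?_ ?_ ?_ hπ
  · rintro σ ⟨a, b, hed, rfl⟩ i hi
    by_cases hia : i = a
    · subst hia; rw [Equiv.swap_apply_left]; exact dummy_of_ed hR hz hed hi
    by_cases hib : i = b
    · subst hib; rw [Equiv.swap_apply_right]; exact dummy_of_ed hR hz (ed_symm hed) hi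
    · rwa [Equiv.swap_apply_of_ne_of_ne hia hib]
  · intro i hi; simpa using hi
  · intro x y hx hy px py i hi
    rw [Equiv.Perm.mul_apply]
    exact px _ (py i hi)

end Aux2

/-- Every weighted simple game admits a normalized realization in which two voters
have equal weights iff they are equally desirable, and a voter has weight zero iff
it is a dummy. -/
theorem exists_realization_weights_reflect_desirability
    (n : ℕ) (W : Finset (Finset (Fin n))) (hSG : IsSimpleGame n W)
    (hwtd : ∃ (q : ℝ) (w : Fin n → ℝ), IsNormRealization n W q w) :
    ∃ (q : ℝ) (w : Fin n → ℝ), IsNormRealization n W q w ∧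
      (∀ i j : Fin n, w i = w j ↔ EquallyDesirable n W i j) ∧
      (∀ i : Fin n, w i = 0 ↔ IsDummy n W i) := by
  classical
  obtain ⟨q, w0, hR0⟩ := hwtd
  -- Step 1: zero out the dummies and renormalize.
  set P : Fin n → Prop := fun i => ¬ IsDummy n W i with hPdef
  set T : ℝ := ∑ i ∈ Finset.univ.filter P, w0 i with hTdef
  have hmemfil : ∀ A : Finset (Fin n), A ∈ W ↔ A.filter P ∈ W := by
    intro A
    constructor
    · exact filter_not_dummy_mem A
    · intro h; exact hSG.2.2 _ h A (Finset.filter_subset _ _)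
  have hNW : Finset.univ.filter P ∈ W := filter_not_dummy_mem _ hSG.1
  have hqT : q ≤ T := (hR0.2.2.2.2 _).mp hNW
  have hTpos : 0 < T := lt_of_lt_of_le hR0.2.2.1 hqT
  set q1 : ℝ := q / T with hq1def
  set w1 : Fin n → ℝ := fun i => (if IsDummy n W i then 0 else w0 i) / T with hw1def
  have hsumA : ∀ A : Finset (Fin n), ∑ i ∈ A, w1 i = (∑ i ∈ A.filter P, w0 i) / T := by
    intro A
    rw [← Finset.sum_div]
    congr 1
    rw [Finset.sum_filter]
    apply Finset.sum_congr rfl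
    intro i _
    by_cases h : IsDummy n W i <;> simp [hPdef, h]
  have hR1 : IsNormRealization n W q1 w1 := by
    refine ⟨?_, ?_, ?_, ?_, ?_⟩
    · intro i
      apply div_nonneg _ hTpos.le
      split_ifs
      · exact le_rfl
      · exact hR0.1 i
    · rw [hsumA Finset.univ, ← hTdef, div_self hTpos.ne']
    · exact div_pos hR0.2.2.1 hTpos
    · rw [div_le_one hTpos]
      exact hqT
    · intro A
      rw [hmemfil A, hR0.2.2.2.2, hsumA A, hq1def, div_le_div_iff_of_pos_right hTpos]
  have hw1z : ∀ i, w1 i = 0 ↔ IsDummy n W i := by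
    intro i
    constructor
    · intro h0
      by_contra hnd
      have h1 : w0 i / T = 0 := by
        rw [hw1def] at h0
        simpa [hnd] using h0
      have hw0i : w0 i = 0 := by
        rcases div_eq_zero_iff.mp h1 with h | h
        · exact h
        · exact absurd h hTpos.ne'
      exact hnd (dummy_of_zero hR0 hw0i)
    · intro h; simp [hw1def, h]
  -- Step 2: average over the monoid generated by swaps of equally desirable voters.
  set Gf : Finset (Equiv.Perm (Fin n)) :=
    Finset.univ.filter (fun π => π ∈ Submonoid.closure (SwapSet n W)) with hGfdef
  have hmemG : ∀ π : Equiv.Perm (Fin n),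
      π ∈ Gf ↔ π ∈ Submonoid.closure (SwapSet n W) := by
    intro π; simp [hGfdef]
  have h1G : (1 : Equiv.Perm (Fin n)) ∈ Gf := (hmemG 1).mpr (one_mem _)
  set m : ℝ := (Gf.card : ℝ) with hmdef
  have hmpos : 0 < m := by
    have hc : 0 < Gf.card := Finset.card_pos.mpr ⟨1, h1G⟩
    rw [hmdef]
    exact_mod_cast hc
  set w2 : Fin n → ℝ := fun i => (∑ π ∈ Gf, w1 (π i)) / m with hw2def
  have hsum2 : ∀ A : Finset (Fin n),
      ∑ i ∈ A, w2 i = (∑ π ∈ Gf, ∑ i ∈ A, w1 (π i)) / m := by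
    intro A
    rw [← Finset.sum_div]
    congr 1
    rw [Finset.sum_comm]
  have himg : ∀ π ∈ Gf, ∀ A : Finset (Fin n),
      ∑ i ∈ A, w1 (π i) = ∑ i ∈ A.image ⇑π, w1 i := by
    intro π _ A
    rw [Finset.sum_image (fun x _ y _ h => π.injective h)]
  have hconst : ∑ _π ∈ Gf, q1 = q1 * m := by
    rw [Finset.sum_const, nsmul_eq_mul, hmdef, mul_comm]
  have hR2 : IsNormRealization n W q1 w2 := by
    refine ⟨?_, ?_, hR1.2.2.1, hR1.2.2.2.1, ?_⟩
    · intro i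
      apply div_nonneg _ hmpos.le
      exact Finset.sum_nonneg fun π _ => hR1.1 _
    · rw [hsum2 Finset.univ]
      have hone : ∀ π ∈ Gf, ∑ i, w1 (π i) = 1 := by
        intro π _
        rw [Equiv.sum_comp π w1, hR1.2.1]
      rw [Finset.sum_congr rfl hone, Finset.sum_const, nsmul_eq_mul, mul_one, hmdef,
        div_self hmpos.ne']
    · intro A
      constructor
      · intro hA
        rw [hsum2, le_div_iff₀ hmpos]
        calc q1 * m = ∑ _π ∈ Gf, q1 := hconst.symm
          _ ≤ ∑ π ∈ Gf, ∑ i ∈ A, w1 (π i) := by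
              apply Finset.sum_le_sum
              intro π hπ
              rw [himg π hπ A]
              exact (hR1.2.2.2.2 _).mp ((perm_image_mem ((hmemG π).mp hπ) A).mpr hA)
      · intro hq'
        by_contra hA
        have hlt : ∑ i ∈ A, w2 i < q1 := by
          rw [hsum2, div_lt_iff₀ hmpos]
          calc ∑ π ∈ Gf, ∑ i ∈ A, w1 (π i) < ∑ _π ∈ Gf, q1 := by
                apply Finset.sum_lt_sum_of_nonempty ⟨1, h1G⟩
                intro π hπ
                rw [himg π hπ A]
                have hnot : A.image ⇑π ∉ W :=
                  fun h => hA ((perm_image_mem ((hmemG π).mp hπ) A).mp h)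
                exact lt_of_not_ge fun hle => hnot ((hR1.2.2.2.2 _).mpr hle)
            _ = q1 * m := hconst
        exact absurd hq' (not_le.mpr hlt)
  refine ⟨q1, w2, hR2, ?_, ?_⟩
  · intro i j
    constructor
    · exact fun h => ed_of_eq hR2 h
    · intro hed
      have hswap : Equiv.swap i j ∈ Submonoid.closure (SwapSet n W) :=
        Submonoid.subset_closure ⟨i, j, hed, rfl⟩
      have hkey : ∑ π ∈ Gf, w1 (π i) = ∑ π ∈ Gf, w1 (π j) := by
        apply Finset.sum_nbij' (fun π => π * Equiv.swap i j) (fun π => π * Equiv.swap i j)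
        · intro π hπ
          exact (hmemG _).mpr (mul_mem ((hmemG π).mp hπ) hswap)
        · intro π hπ
          exact (hmemG _).mpr (mul_mem ((hmemG π).mp hπ) hswap)
        · intro π _
          rw [mul_assoc, Equiv.swap_mul_self, mul_one]
        · intro π _
          rw [mul_assoc, Equiv.swap_mul_self, mul_one]
        · intro π _
          rw [Equiv.Perm.mul_apply, Equiv.swap_apply_right]
      rw [hw2def]
      dsimp only
      rw [hkey]
  · intro i
    constructor
    · exact fun h => dummy_of_zero hR2 h
    · intro hd
      have hz : ∀ π ∈ Gf, w1 (π i) = 0 := by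
        intro π hπ
        exact (hw1z _).mpr (perm_dummy hR1 (fun k hk => (hw1z k).mpr hk)
          ((hmemG π).mp hπ) i hd)
      rw [hw2def]
      dsimp only
      rw [Finset.sum_eq_zero hz, zero_div]
end

section
/- Let w : N → ℝ be a generic weight vector with all w_i ≥ 0 and Σ_{i∈N} w_i = 1, where N = {1,…,n}, and for q ∈ (0,1] let W(q) = {A ⊆ N : Σ_{i∈A} w_i ≥ q}. Then for every q ∈ (0,1] there exists q* ∈ (0,1] such that W(q*) is the dual of W(q): for every A ⊆ N, A ∈ W(q*) ⇔ N∖A ∉ W(q). (Thus the chain of games along a generic vertical line is self-dual: if a game appears in it, so does its dual.) -/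
/-- The game at quota `q` for the weight vector `w`. -/
noncomputable def gameAt (n : ℕ) (w : Fin n → ℝ) (q : ℝ) : Finset (Finset (Fin n)) :=
  Finset.univ.filter fun A => q ≤ ∑ i ∈ A, w i

/-- For a generic nonnegative weight vector summing to `1`, the chain of games along
the vertical line above `w` is self-dual: for each `q ∈ (0,1]` there is `q* ∈ (0,1]`
such that `W(q*)` is the dual of `W(q)`. -/
theorem generic_vertical_line_selfDual
    (n : ℕ) (w : Fin n → ℝ) (hw : ∀ i, 0 ≤ w i) (hsum : ∑ i, w i = 1)
    (hgen : ∀ A B : Finset (Fin n), (∑ i ∈ A, w i) = (∑ i ∈ B, w i) → A = B) :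
    ∀ q ∈ Set.Ioc (0:ℝ) 1, ∃ qs ∈ Set.Ioc (0:ℝ) 1,
      ∀ A : Finset (Fin n), (A ∈ gameAt n w qs ↔ Aᶜ ∉ gameAt n w q) := by
  intro q hq
  obtain ⟨hq0, hq1⟩ := hq
  -- set of subset sums exceeding 1 - q
  set T : Finset ℝ :=
    (Finset.univ.image (fun A : Finset (Fin n) => ∑ i ∈ A, w i)).filter
      (fun s => 1 - q < s) with hT
  have h1T : (1:ℝ) ∈ T := by
    simp only [hT, Finset.mem_filter, Finset.mem_image]
    exact ⟨⟨Finset.univ, Finset.mem_univ _, hsum⟩, by linarith⟩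
  have hTne : T.Nonempty := ⟨1, h1T⟩
  refine ⟨T.min' hTne, ⟨?_, ?_⟩, ?_⟩
  · have := T.min'_mem hTne
    rw [Finset.mem_filter] at this
    linarith [this.2]
  · exact Finset.min'_le T 1 h1T
  · intro A
    simp only [gameAt, Finset.mem_filter, Finset.mem_univ, true_and, not_le]
    have hcompl : ∑ i ∈ Aᶜ, w i = 1 - ∑ i ∈ A, w i := by
      have := Finset.sum_add_sum_compl A w
      linarith
    rw [hcompl]
    constructor
    · intro h
      have := T.min'_mem hTne
      rw [Finset.mem_filter] at this
      linarith [this.2]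
    · intro h
      apply Finset.min'_le
      rw [hT, Finset.mem_filter]
      exact ⟨Finset.mem_image_of_mem _ (Finset.mem_univ A), by linarith⟩
end

section
/- Let W be a weighted simple game on n voters and let A ∈ W be a coalition such that U := W ∖ {A} is also a simple game (so A is a minimal winning coalition of W and A ≠ N). Then U is weighted if and only if there exists a normalized realization (q, w) of W such that Σ_{i∈A} w_i < Σ_{i∈B} w_i for every B ∈ W with B ≠ A. -/
set_option maxHeartbeats 1000000 in
/-- Let `W` be a weighted simple game and `A ∈ W` be such that `U = W \ {A}` is a
simple game. Then `U` is weighted iff `W` has a normalized realization at which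
the weight of `A` is strictly smaller than that of every other winning coalition. -/
theorem cover_weighted_iff_facet
    (n : ℕ) (W : Finset (Finset (Fin n))) (hSG : IsSimpleGame n W)
    (hwtd : ∃ (q : ℝ) (w : Fin n → ℝ), IsNormRealization n W q w)
    (A : Finset (Fin n)) (hA : A ∈ W)
    (hU : IsSimpleGame n (W.erase A)) :
    (∃ (q : ℝ) (w : Fin n → ℝ), IsNormRealization n (W.erase A) q w) ↔
      (∃ (q : ℝ) (w : Fin n → ℝ), IsNormRealization n W q w ∧
        ∀ B ∈ W, B ≠ A → (∑ i ∈ A, w i) < ∑ i ∈ B, w i) := by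
  classical
  constructor
  · -- hard direction
    rintro ⟨q', w', hw'0, hw'sum, hq'0, hq'1, hwin'⟩
    obtain ⟨q, w, hw0, hwsum, hq0, hq1, hwin⟩ := hwtd
    have hw'le1 : ∀ X : Finset (Fin n), ∑ i ∈ X, w' i ≤ 1 := by
      intro X
      rw [← hw'sum]
      exact Finset.sum_le_sum_of_subset_of_nonneg (Finset.subset_univ X)
        (fun i _ _ => hw'0 i)
    have hw'nn : ∀ X : Finset (Fin n), 0 ≤ ∑ i ∈ X, w' i :=
      fun X => Finset.sum_nonneg (fun i _ => hw'0 i)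
    have hAU : A ∉ W.erase A := Finset.notMem_erase A W
    have hw'A : ∑ i ∈ A, w' i < q' := by
      by_contra h
      exact hAU ((hwin' A).mpr (le_of_not_gt h))
    have hwA : q ≤ ∑ i ∈ A, w i := (hwin A).mp hA
    set γ : ℝ := q' - ∑ i ∈ A, w' i with hγdef
    have hγ : 0 < γ := by simp only [hγdef]; linarith
    set a : ℝ := (∑ i ∈ A, w i) - q with hadef
    have ha : 0 ≤ a := by simp only [hadef]; linarith
    have hden : 0 < γ + a := by linarith
    set t : ℝ := γ / (γ + a) with htdef
    have ht0 : 0 < t := div_pos hγ hden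
    have ht1 : t ≤ 1 := by rw [htdef, div_le_one hden]; linarith
    set s : ℝ := 1 - t with hsdef
    have hs0 : 0 ≤ s := by simp only [hsdef]; linarith
    have hst : s + t = 1 := by simp only [hsdef]; ring
    have hkey : t * a = s * γ := by
      have h1 : t * (γ + a) = γ := by
        rw [htdef]; field_simp
      simp only [hsdef]; nlinarith [h1]
    -- the intermediate weight function
    set vf : Fin n → ℝ := fun i => s * w' i + t * w i with hvfdef
    have hvsum : ∀ X : Finset (Fin n),
        ∑ i ∈ X, vf i = s * (∑ i ∈ X, w' i) + t * (∑ i ∈ X, w i) := by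
      intro X
      simp [hvfdef, Finset.sum_add_distrib, Finset.mul_sum]
    set Q : ℝ := s * q' + t * q with hQdef
    have hQ0 : 0 < Q := by
      have h1 : 0 ≤ s * q' := mul_nonneg hs0 hq'0.le
      have h2 : 0 < t * q := mul_pos ht0 hq0
      simp only [hQdef]; linarith
    have hQA : ∑ i ∈ A, vf i = Q := by
      rw [hvsum, hQdef]
      have : s * (∑ i ∈ A, w' i) = s * q' - s * γ := by
        simp only [hγdef]; ring
      have h2 : t * (∑ i ∈ A, w i) = t * q + t * a := by
        simp only [hadef]; ring
      linarith [hkey]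
    -- winning coalitions are at least Q
    have hvW : ∀ B ∈ W, Q ≤ ∑ i ∈ B, vf i := by
      intro B hB
      by_cases hBA : B = A
      · rw [hBA, hQA]
      · have hB' : B ∈ W.erase A := Finset.mem_erase.mpr ⟨hBA, hB⟩
        have h1 : q' ≤ ∑ i ∈ B, w' i := (hwin' B).mp hB'
        have h2 : q ≤ ∑ i ∈ B, w i := (hwin B).mp hB
        rw [hvsum, hQdef]
        have := mul_le_mul_of_nonneg_left h1 hs0
        have := mul_le_mul_of_nonneg_left h2 ht0.le
        linarith
    -- losing coalitions are strictly below Q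
    have hvL : ∀ S : Finset (Fin n), S ∉ W → ∑ i ∈ S, vf i < Q := by
      intro S hS
      have hS' : S ∉ W.erase A := fun h => hS (Finset.mem_of_mem_erase h)
      have h1 : ∑ i ∈ S, w' i < q' := by
        by_contra h
        exact hS' ((hwin' S).mpr (le_of_not_gt h))
      have h2 : ∑ i ∈ S, w i < q := by
        by_contra h
        exact hS ((hwin S).mpr (le_of_not_gt h))
      rw [hvsum, hQdef]
      have := mul_le_mul_of_nonneg_left h1.le hs0
      have := mul_lt_mul_of_pos_left h2 ht0
      linarith
    -- the maximum losing value
    set Lset : Finset (Finset (Fin n)) := Finset.univ.filter (fun S => S ∉ W) with hLdef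
    have hLne : Lset.Nonempty := ⟨∅, by simp [hLdef, hSG.2.1]⟩
    set m : ℝ := Lset.sup' hLne (fun S => ∑ i ∈ S, vf i) with hmdef
    have hmlt : m < Q := by
      rw [hmdef, Finset.sup'_lt_iff]
      intro S hS
      exact hvL S (by simpa [hLdef] using hS)
    have hmge : ∀ S : Finset (Fin n), S ∉ W → ∑ i ∈ S, vf i ≤ m := by
      intro S hS
      exact Finset.le_sup' (fun S => ∑ i ∈ S, vf i) (by simp [hLdef, hS])
    set ε : ℝ := (Q - m) / 2 with hεdef
    have hε0 : 0 < ε := by simp only [hεdef]; linarith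
    have hmε : m + ε < Q := by simp only [hεdef]; linarith
    set D : ℝ := 1 + ε with hDdef
    have hD0 : 0 < D := by simp only [hDdef]; linarith
    -- the final weight function and quota
    refine ⟨(Q + ε * ∑ i ∈ A, w' i) / D, fun i => (vf i + ε * w' i) / D, ⟨?_, ?_, ?_, ?_, ?_⟩, ?_⟩
    · intro i
      have h1 : 0 ≤ vf i := by
        have := hw0 i; have := hw'0 i
        have := mul_nonneg hs0 (hw'0 i)
        have := mul_nonneg ht0.le (hw0 i)
        simp only [hvfdef]; linarith
      have h2 : 0 ≤ ε * w' i := mul_nonneg hε0.le (hw'0 i)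
      positivity
    · rw [← Finset.sum_div]
      rw [Finset.sum_add_distrib, ← Finset.mul_sum, hw'sum]
      have : ∑ i, vf i = 1 := by
        have := hvsum Finset.univ
        rw [hw'sum, hwsum] at this
        rw [this]; linarith
      rw [this, hDdef]
      field_simp
    · apply div_pos _ hD0
      have : 0 ≤ ε * ∑ i ∈ A, w' i := mul_nonneg hε0.le (hw'nn A)
      linarith
    · rw [div_le_one hD0]
      have h1 : ∑ i ∈ A, vf i ≤ ∑ i, vf i := by
        apply Finset.sum_le_sum_of_subset_of_nonneg (Finset.subset_univ A)
        intro i _ _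
        have := mul_nonneg hs0 (hw'0 i)
        have := mul_nonneg ht0.le (hw0 i)
        simp only [hvfdef]; linarith
      have h2 : ∑ i, vf i = 1 := by
        have := hvsum Finset.univ
        rw [hw'sum, hwsum] at this
        rw [this]; linarith
      have h3 : ε * ∑ i ∈ A, w' i ≤ ε * 1 :=
        mul_le_mul_of_nonneg_left (hw'le1 A) hε0.le
      simp only [hDdef]
      linarith [hQA]
    · -- the realization property
      intro X
      have hXsum : ∑ i ∈ X, (vf i + ε * w' i) / D
          = ((∑ i ∈ X, vf i) + ε * ∑ i ∈ X, w' i) / D := by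
        rw [← Finset.sum_div, Finset.sum_add_distrib, ← Finset.mul_sum]
      rw [hXsum, div_le_div_iff_of_pos_right hD0]
      constructor
      · intro hX
        by_cases hXA : X = A
        · rw [hXA, hQA]
        · have hX' : X ∈ W.erase A := Finset.mem_erase.mpr ⟨hXA, hX⟩
          have h1 : q' ≤ ∑ i ∈ X, w' i := (hwin' X).mp hX'
          have h2 := hvW X hX
          have h3 : ε * ∑ i ∈ A, w' i ≤ ε * ∑ i ∈ X, w' i :=
            mul_le_mul_of_nonneg_left (by linarith) hε0.le
          linarith
      · intro hX
        by_contra hXW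
        have h1 := hmge X hXW
        have h2 : ε * ∑ i ∈ X, w' i ≤ ε * 1 :=
          mul_le_mul_of_nonneg_left (hw'le1 X) hε0.le
        have h3 : 0 ≤ ε * ∑ i ∈ A, w' i := mul_nonneg hε0.le (hw'nn A)
        linarith
    · -- strictness
      intro B hB hBA
      have hB' : B ∈ W.erase A := Finset.mem_erase.mpr ⟨hBA, hB⟩
      have h1 : q' ≤ ∑ i ∈ B, w' i := (hwin' B).mp hB'
      have h2 := hvW B hB
      have hAsum : ∑ i ∈ A, (vf i + ε * w' i) / D
          = ((∑ i ∈ A, vf i) + ε * ∑ i ∈ A, w' i) / D := by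
        rw [← Finset.sum_div, Finset.sum_add_distrib, ← Finset.mul_sum]
      have hBsum : ∑ i ∈ B, (vf i + ε * w' i) / D
          = ((∑ i ∈ B, vf i) + ε * ∑ i ∈ B, w' i) / D := by
        rw [← Finset.sum_div, Finset.sum_add_distrib, ← Finset.mul_sum]
      rw [hAsum, hBsum, div_lt_div_iff_of_pos_right hD0]
      have h3 : ε * ∑ i ∈ A, w' i < ε * ∑ i ∈ B, w' i :=
        mul_lt_mul_of_pos_left (by linarith) hε0
      linarith [hQA]
  · -- easy direction
    rintro ⟨q₂, w₂, ⟨h20, h2sum, h2q0, h2q1, h2win⟩, hstrict⟩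
    have hUne : (W.erase A).Nonempty := ⟨Finset.univ, hU.1⟩
    set T : Finset ℝ := (W.erase A).image (fun B => ∑ i ∈ B, w₂ i) with hTdef
    have hTne : T.Nonempty := hUne.image _
    set q' : ℝ := T.min' hTne with hq'def
    have hmem : q' ∈ (W.erase A).image (fun B => ∑ i ∈ B, w₂ i) := T.min'_mem hTne
    obtain ⟨B₀, hB₀U, hB₀⟩ := Finset.mem_image.mp hmem
    have hmin : ∀ B ∈ W.erase A, q' ≤ ∑ i ∈ B, w₂ i := by
      intro B hB
      exact T.min'_le _ (Finset.mem_image_of_mem _ hB)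
    have hB₀W : B₀ ∈ W := Finset.mem_of_mem_erase hB₀U
    have hB₀A : B₀ ≠ A := Finset.ne_of_mem_erase hB₀U
    have hAlt : ∑ i ∈ A, w₂ i < q' := hB₀ ▸ hstrict B₀ hB₀W hB₀A
    have hqA : q₂ ≤ ∑ i ∈ A, w₂ i := (h2win A).mp hA
    refine ⟨q', w₂, h20, h2sum, by linarith [(h2win B₀).mp hB₀W, hB₀], ?_, ?_⟩
    · have := hmin Finset.univ hU.1
      rw [h2sum] at this
      linarith
    · intro X
      constructor
      · exact hmin X
      · intro hX
        have hXA : ∑ i ∈ A, w₂ i < ∑ i ∈ X, w₂ i := by linarith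
        have hXW : X ∈ W := (h2win X).mpr (by linarith)
        exact Finset.mem_erase.mpr ⟨fun h => by rw [h] at hXA; linarith, hXW⟩
end

section
/- Let U be a weighted simple game on n voters and let A ⊆ N be a losing coalition of U (A ∉ U) such that W := U ∪ {A} is also a simple game (so A is a maximal losing coalition of U and A ≠ ∅). Then W is weighted if and only if there exists a normalized realization (q, w) of U such that Σ_{i∈A} w_i > Σ_{i∈C} w_i for every C ∉ U with C ≠ A. -/
private lemma rho_lt_sigma {a b c d : ℝ} (ha : 0 < a) (hd : 0 < d)
    (hac : 0 < a + c) (hbd : 0 < b + d) :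
    (if c < 0 then (-c)/(d - c) else 0) < (if b < 0 then a/(a - b) else 1) := by
  by_cases hc : c < 0 <;> by_cases hb : b < 0 <;> simp only [hc, hb, if_true, if_false]
  · rw [div_lt_div_iff₀ (by linarith) (by linarith)]
    nlinarith [mul_pos hd hac, mul_pos (show (0:ℝ) < -c by linarith) hbd]
  · rw [div_lt_one (by linarith)]; linarith
  · exact div_pos ha (by linarith)
  · norm_num

/-- Let `U` be a weighted simple game and `A ∉ U` a losing coalition such that
`W = U ∪ {A}` is a simple game. Then `W` is weighted iff `U` has a normalized
realization at which the weight of `A` is strictly greater than that of every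
other losing coalition. -/
theorem covered_weighted_iff_facet
    (n : ℕ) (U : Finset (Finset (Fin n))) (hSG : IsSimpleGame n U)
    (hwtd : ∃ (q : ℝ) (w : Fin n → ℝ), IsNormRealization n U q w)
    (A : Finset (Fin n)) (hA : A ∉ U)
    (hW : IsSimpleGame n (insert A U)) :
    (∃ (q : ℝ) (w : Fin n → ℝ), IsNormRealization n (insert A U) q w) ↔
      (∃ (q : ℝ) (w : Fin n → ℝ), IsNormRealization n U q w ∧
        ∀ C : Finset (Fin n), C ∉ U → C ≠ A → (∑ i ∈ C, w i) < ∑ i ∈ A, w i) := by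
  have hAne : A ≠ ∅ := fun h => hW.2.1 (h ▸ Finset.mem_insert_self A U)
  have hUne : U.Nonempty := ⟨Finset.univ, hSG.1⟩
  constructor
  · rintro ⟨p, v, hv⟩
    obtain ⟨q0, w0, hw0⟩ := hwtd
    obtain ⟨hv0, hvsum, hp0, hp1, hvmem⟩ := hv
    obtain ⟨hw00, hwsum, hq0, hq01, hwmem⟩ := hw0
    set f : Finset (Fin n) → ℝ := fun B => ∑ i ∈ B, w0 i with hfdef
    set g : Finset (Fin n) → ℝ := fun B => ∑ i ∈ B, v i with hgdef
    -- basic inequalities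
    have hfA : f A < q0 := by
      by_contra h
      exact hA ((hwmem A).mpr (le_of_not_gt h))
    have hgA : p ≤ g A := (hvmem A).mp (Finset.mem_insert_self A U)
    have hfS : ∀ S ∈ U, q0 ≤ f S := fun S hS => (hwmem S).mp hS
    have hgS : ∀ S ∈ U, p ≤ g S := fun S hS =>
      (hvmem S).mp (Finset.mem_insert_of_mem hS)
    have hnotW : ∀ C : Finset (Fin n), C ∉ U → C ≠ A → C ∉ insert A U := by
      intro C hC1 hC2 hmem
      rcases Finset.mem_insert.mp hmem with h | h
      · exact hC2 h
      · exact hC1 h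
    have hfC : ∀ C : Finset (Fin n), C ∉ U → C ≠ A → f C < q0 := by
      intro C hC1 hC2
      by_contra h
      exact hC1 ((hwmem C).mpr (le_of_not_gt h))
    have hgC : ∀ C : Finset (Fin n), C ∉ U → C ≠ A → g C < p := by
      intro C hC1 hC2
      by_contra h
      exact hnotW C hC1 hC2 ((hvmem C).mpr (le_of_not_gt h))
    -- the losing set
    set L : Finset (Finset (Fin n)) :=
      Finset.univ.filter (fun C => C ∉ U ∧ C ≠ A) with hLdef
    have hmemL : ∀ C : Finset (Fin n), C ∈ L ↔ (C ∉ U ∧ C ≠ A) := by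
      intro C; simp [hLdef]
    have hLne : L.Nonempty := ⟨∅, (hmemL ∅).mpr ⟨hSG.2.1, Ne.symm hAne⟩⟩
    -- thresholds for the mixing parameter
    set ρ : Finset (Fin n) → ℝ := fun C =>
      if f A - f C < 0 then (-(f A - f C))/((g A - g C) - (f A - f C)) else 0 with hρdef
    set σ : Finset (Fin n) → ℝ := fun S =>
      if g S - g A < 0 then (f S - f A)/((f S - f A) - (g S - g A)) else 1 with hσdef
    have hpair : ∀ C ∈ L, ∀ S ∈ U, ρ C < σ S := by
      intro C hC S hS
      obtain ⟨hC1, hC2⟩ := (hmemL C).mp hC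
      have ha : 0 < f S - f A := by have := hfS S hS; linarith
      have hd : 0 < g A - g C := by have := hgC C hC1 hC2; linarith
      have hac : 0 < (f S - f A) + (f A - f C) := by
        have := hfC C hC1 hC2; have := hfS S hS; linarith
      have hbd : 0 < (g S - g A) + (g A - g C) := by
        have := hgC C hC1 hC2; have := hgS S hS; linarith
      simpa [hρdef, hσdef] using rho_lt_sigma ha hd hac hbd
    set ρmax : ℝ := L.sup' hLne ρ with hρmax
    set σmin : ℝ := U.inf' hUne σ with hσmin
    have hρσ : ρmax < σmin := by
      rw [hρmax, Finset.sup'_lt_iff]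
      intro C hC
      rw [hσmin, Finset.lt_inf'_iff]
      intro S hS
      exact hpair C hC S hS
    have hρnonneg : 0 ≤ ρmax := by
      refine le_trans ?_ (Finset.le_sup' ρ ((hmemL ∅).mpr ⟨hSG.2.1, Ne.symm hAne⟩))
      rw [hρdef]
      by_cases h : f A - f ∅ < 0
      · simp only [h, if_true]
        apply div_nonneg (by linarith)
        have hd : 0 < g A - g ∅ := by
          have := hgC ∅ hSG.2.1 (Ne.symm hAne); linarith
        linarith
      · simp [h]
    have hσle1 : σmin ≤ 1 := by
      refine le_trans (Finset.inf'_le σ hSG.1) ?_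
      rw [hσdef]
      by_cases h : g Finset.univ - g A < 0
      · simp only [h, if_true]
        rcases le_or_gt (f Finset.univ - f A) 0 with h1 | h1
        · exact le_trans (div_nonpos_of_nonpos_of_nonneg h1 (by linarith)) zero_le_one
        · rw [div_le_one (by linarith)]; linarith
      · simp [h]
    set t : ℝ := (ρmax + σmin) / 2 with htdef
    have ht1 : ρmax < t := by rw [htdef]; linarith
    have ht2 : t < σmin := by rw [htdef]; linarith
    have ht0 : 0 < t := lt_of_le_of_lt hρnonneg ht1
    have htlt1 : t < 1 := lt_of_lt_of_le ht2 hσle1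
    -- the mixed weights
    set w' : Fin n → ℝ := fun i => (1 - t) * w0 i + t * v i with hw'def
    have hF : ∀ B : Finset (Fin n), (∑ i ∈ B, w' i) = (1 - t) * f B + t * g B := by
      intro B
      rw [hw'def, hfdef, hgdef]
      simp [Finset.sum_add_distrib, Finset.mul_sum]
    -- A is strictly below every winning coalition
    have hAltS : ∀ S ∈ U, (∑ i ∈ A, w' i) < ∑ i ∈ S, w' i := by
      intro S hS
      rw [hF, hF]
      have hσS : t < σ S := lt_of_lt_of_le ht2 (Finset.inf'_le σ hS)
      rw [hσdef] at hσS
      by_cases hb : g S - g A < 0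
      · simp only [hb, if_true] at hσS
        have ha : 0 < f S - f A := by have := hfS S hS; linarith
        rw [lt_div_iff₀ (by linarith)] at hσS
        nlinarith
      · push_neg at hb
        have ha : 0 < f S - f A := by have := hfS S hS; linarith
        nlinarith
    -- every losing coalition other than A is strictly below A
    have hdom : ∀ C : Finset (Fin n), C ∉ U → C ≠ A →
        (∑ i ∈ C, w' i) < ∑ i ∈ A, w' i := by
      intro C hC1 hC2
      rw [hF, hF]
      have hρC : ρ C < t :=
        lt_of_le_of_lt (Finset.le_sup' ρ ((hmemL C).mpr ⟨hC1, hC2⟩)) ht1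
      have hd : 0 < g A - g C := by have := hgC C hC1 hC2; linarith
      rw [hρdef] at hρC
      by_cases hc : f A - f C < 0
      · simp only [hc, if_true] at hρC
        rw [div_lt_iff₀ (by linarith)] at hρC
        nlinarith
      · push_neg at hc
        nlinarith
    -- the new quota
    set q' : ℝ := U.inf' hUne (fun S => ∑ i ∈ S, w' i) with hq'def
    have hAltq' : (∑ i ∈ A, w' i) < q' := by
      rw [hq'def, Finset.lt_inf'_iff]
      exact hAltS
    refine ⟨q', w', ⟨?_, ?_, ?_, ?_, ?_⟩, ?_⟩
    · intro i
      exact add_nonneg (mul_nonneg (by linarith) (hw00 i)) (mul_nonneg ht0.le (hv0 i))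
    · simp only [hw'def]
      rw [Finset.sum_add_distrib, ← Finset.mul_sum, ← Finset.mul_sum, hvsum, hwsum]
      ring
    · have h0 : (∑ i ∈ (∅ : Finset (Fin n)), w' i) = 0 := by simp
      have := hdom ∅ hSG.2.1 (Ne.symm hAne)
      linarith
    · refine le_trans (Finset.inf'_le _ hSG.1) ?_
      rw [hF, hfdef, hgdef]
      simp only [hwsum, hvsum]
      norm_num
    · intro B
      constructor
      · intro hB
        exact Finset.inf'_le _ hB
      · intro hB
        by_contra hBU
        by_cases hBA : B = A
        · rw [hBA] at hB; linarith
        · have := hdom B hBU hBA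
          linarith
    · exact hdom
  · rintro ⟨q, w, hw, hdom⟩
    obtain ⟨hw0, hwsum, hq, hq1, hmem⟩ := hw
    have hAq : (∑ i ∈ A, w i) < q := by
      by_contra h
      exact hA ((hmem A).mpr (le_of_not_gt h))
    refine ⟨∑ i ∈ A, w i, w, ?_, hwsum, ?_, ?_, ?_⟩
    · exact hw0
    · have h0 : (∑ i ∈ (∅ : Finset (Fin n)), w i) = 0 := by simp
      have := hdom ∅ hSG.2.1 (Ne.symm hAne)
      linarith
    · rw [← hwsum]
      exact Finset.sum_le_sum_of_subset_of_nonneg (Finset.subset_univ A)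
        (fun i _ _ => hw0 i)
    · intro B
      constructor
      · intro hB
        rcases Finset.mem_insert.mp hB with h | h
        · rw [h]
        · have := (hmem B).mp h; linarith
      · intro hB
        by_contra hBW
        have hBU : B ∉ U := fun h => hBW (Finset.mem_insert_of_mem h)
        have hBA : B ≠ A := fun h => hBW (h ▸ Finset.mem_insert_self A U)
        have := hdom B hBU hBA
        linarith
end

section
/- Let N = {1,…,9} and let W be the simple game whose winning coalitions are exactly those A ⊆ N with |A ∩ {8,9}| ≥ 1, |A ∩ {7,8,9}| ≥ 2, |A ∩ {4,5,6,7,8,9}| ≥ 3, and |A| ≥ 4 (the linear game generated by the single shift-minimal winning coalition {8,7,4,1}). Then W is not weighted: there exist no weights w : N → ℝ with w_i ≥ 0 and no quota q > 0 such that for every A ⊆ N, A ∈ W ⇔ Σ_{i∈A} w_i ≥ q. (For instance, {9,7,4,1} and {8,7,5,2} are winning while {9,8,7} and {7,5,4,2,1} are losing, yet the two pairs have equal total weight.) -/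
/-- The linear game on 9 voters generated by the shift-minimal winning coalition
`{8,7,4,1}` (voters `1,…,9` are indices `0,…,8` of `Fin 9`): a coalition wins iff
it contains at least 1 of the top 2 voters, at least 2 of the top 3 voters,
at least 3 of the top 6 voters, and at least 4 voters overall. -/
def game8741 : Set (Finset (Fin 9)) :=
  {A | 1 ≤ (A.filter (fun i => 7 ≤ i.val)).card ∧
       2 ≤ (A.filter (fun i => 6 ≤ i.val)).card ∧
       3 ≤ (A.filter (fun i => 3 ≤ i.val)).card ∧
       4 ≤ A.card}

/-- The game `⟨8741⟩` is not weighted: no nonnegative weights and positive quota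
realize exactly its winning coalitions. -/
theorem game8741_not_weighted :
    ¬ ∃ (q : ℝ) (w : Fin 9 → ℝ), (∀ i, 0 ≤ w i) ∧ 0 < q ∧
        ∀ A : Finset (Fin 9), A ∈ game8741 ↔ q ≤ ∑ i ∈ A, w i := by
  rintro ⟨q, w, hw, hq, h⟩
  have hA1 : ({0,3,6,8} : Finset (Fin 9)) ∈ game8741 := by
    simp only [game8741, Set.mem_setOf_eq]; decide
  have hA2 : ({1,4,6,7} : Finset (Fin 9)) ∈ game8741 := by
    simp only [game8741, Set.mem_setOf_eq]; decide
  have hB1 : ({6,7,8} : Finset (Fin 9)) ∉ game8741 := by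
    simp only [game8741, Set.mem_setOf_eq]; decide
  have hB2 : ({0,1,3,4,6} : Finset (Fin 9)) ∉ game8741 := by
    simp only [game8741, Set.mem_setOf_eq]; decide
  have h1 := (h _).mp hA1
  have h2 := (h _).mp hA2
  have h3 : ∑ i ∈ ({6,7,8} : Finset (Fin 9)), w i < q := by
    by_contra hc
    exact hB1 ((h _).mpr (le_of_not_gt hc))
  have h4 : ∑ i ∈ ({0,1,3,4,6} : Finset (Fin 9)), w i < q := by
    by_contra hc
    exact hB2 ((h _).mpr (le_of_not_gt hc))
  rw [show ({0,3,6,8}:Finset (Fin 9)) = insert 0 (insert 3 (insert 6 {8})) from rfl,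
    Finset.sum_insert (by decide), Finset.sum_insert (by decide),
    Finset.sum_insert (by decide), Finset.sum_singleton] at h1
  rw [show ({1,4,6,7}:Finset (Fin 9)) = insert 1 (insert 4 (insert 6 {7})) from rfl,
    Finset.sum_insert (by decide), Finset.sum_insert (by decide),
    Finset.sum_insert (by decide), Finset.sum_singleton] at h2
  rw [show ({6,7,8}:Finset (Fin 9)) = insert 6 (insert 7 {8}) from rfl,
    Finset.sum_insert (by decide), Finset.sum_insert (by decide),
    Finset.sum_singleton] at h3
  rw [show ({0,1,3,4,6}:Finset (Fin 9)) = insert 0 (insert 1 (insert 3 (insert 4 {6}))) from rfl,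
    Finset.sum_insert (by decide), Finset.sum_insert (by decide),
    Finset.sum_insert (by decide), Finset.sum_insert (by decide),
    Finset.sum_singleton] at h4
  linarith
end

section
/- For subsets A, B ⊆ N = {1,…,n}, the following are equivalent: (i) B ⪰ A in the coalition ordering, i.e., |B ∩ {k,…,n}| ≥ |A ∩ {k,…,n}| for every 1 ≤ k ≤ n; (ii) Σ_{i∈B} w_i ≥ Σ_{i∈A} w_i for every weight vector w : N → ℝ with 0 ≤ w_1 ≤ w_2 ≤ ⋯ ≤ w_n. (Geometrically: the hyperplane of coalition B lies above that of A throughout the region of ordered weights exactly when B dominates A in the coalitions poset M(n).) -/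
/-- For nonnegative monotone `w`, the sum of `w` over a coalition `S` can be written
as a nonnegative combination of the tail-cardinalities of `S`. -/
private lemma sum_eq_abel {n : ℕ} (hn : 0 < n) (w : Fin n → ℝ) (S : Finset (Fin n)) :
    (∑ i ∈ S, w i) =
      w ⟨0, hn⟩ * S.card +
        ∑ k ∈ Finset.range n,
          (w ⟨min (k + 1) (n - 1), by omega⟩ - w ⟨min k (n - 1), by omega⟩) *
            ((S.filter (fun i => k < i.val)).card : ℝ) := by
  set W : ℕ → ℝ := fun m => w ⟨min m (n - 1), by omega⟩ with hW
  have key : ∀ i : Fin n, w i = W 0 + ∑ k ∈ Finset.range (i : ℕ), (W (k + 1) - W k) := by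
    intro i
    rw [Finset.sum_range_sub]
    have : W (i : ℕ) = w i := by
      simp only [hW]
      congr 1
      ext
      simp only []
      omega
    rw [this]; ring
  calc (∑ i ∈ S, w i)
      = ∑ i ∈ S, (W 0 + ∑ k ∈ Finset.range (i : ℕ), (W (k + 1) - W k)) := by
        exact Finset.sum_congr rfl fun i _ => key i
    _ = W 0 * S.card + ∑ i ∈ S, ∑ k ∈ Finset.range (i : ℕ), (W (k + 1) - W k) := by
        rw [Finset.sum_add_distrib, Finset.sum_const, nsmul_eq_mul, mul_comm]
    _ = W 0 * S.card + ∑ i ∈ S, ∑ k ∈ Finset.range n,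
          (if k < i.val then (W (k + 1) - W k) else 0) := by
        congr 1
        refine Finset.sum_congr rfl fun i _ => ?_
        rw [Finset.sum_ite, Finset.sum_const_zero, add_zero]
        refine Finset.sum_congr ?_ (fun _ _ => rfl)
        ext k
        simp only [Finset.mem_range, Finset.mem_filter]
        have := i.isLt
        omega
    _ = W 0 * S.card + ∑ k ∈ Finset.range n, ∑ i ∈ S,
          (if k < i.val then (W (k + 1) - W k) else 0) := by
        rw [Finset.sum_comm]
    _ = _ := by
        congr 1
        refine Finset.sum_congr rfl fun k _ => ?_
        rw [Finset.sum_ite, Finset.sum_const_zero, add_zero, Finset.sum_const,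
          nsmul_eq_mul, mul_comm]

/-- A coalition `B` dominates `A` in the coalition ordering iff `B`'s total weight
is at least `A`'s for every nonnegative monotone (ordered) weight vector. -/
theorem coalGE_iff_forall_ordered_weights
    (n : ℕ) (A B : Finset (Fin n)) :
    (∀ k : Fin n,
        (A.filter (fun i => k ≤ i)).card ≤ (B.filter (fun i => k ≤ i)).card) ↔
      (∀ w : Fin n → ℝ, (∀ i, 0 ≤ w i) → Monotone w →
        (∑ i ∈ A, w i) ≤ ∑ i ∈ B, w i) := by
  constructor
  · intro h w hw hmono
    rcases Nat.eq_zero_or_pos n with hn | hn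
    · subst hn
      simp [Finset.eq_empty_of_isEmpty A, Finset.eq_empty_of_isEmpty B]
    rw [sum_eq_abel hn w A, sum_eq_abel hn w B]
    have hcard : ∀ k, k < n →
        (A.filter (fun i => k < i.val)).card ≤ (B.filter (fun i => k < i.val)).card := by
      intro k hk
      by_cases hk1 : k + 1 < n
      · have := h ⟨k + 1, hk1⟩
        have heq : ∀ (S : Finset (Fin n)),
            S.filter (fun i => (⟨k + 1, hk1⟩ : Fin n) ≤ i) = S.filter (fun i => k < i.val) := by
          intro S
          refine Finset.filter_congr fun i _ => ?_
          simp [Fin.le_def, Nat.succ_le_iff]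
        rwa [heq A, heq B] at this
      · have heq : ∀ (S : Finset (Fin n)),
            S.filter (fun i => k < i.val) = ∅ := by
          intro S
          refine Finset.filter_false_of_mem fun i _ => ?_
          have := i.isLt
          omega
        rw [heq A, heq B]
    have hAB : A.card ≤ B.card := by
      have := h ⟨0, hn⟩
      have heq : ∀ (S : Finset (Fin n)),
          S.filter (fun i => (⟨0, hn⟩ : Fin n) ≤ i) = S := by
        intro S
        refine Finset.filter_true_of_mem fun i _ => ?_
        simp [Fin.le_def]
      rwa [heq A, heq B] at this
    apply add_le_add
    · exact mul_le_mul_of_nonneg_left (by exact_mod_cast hAB) (hw _)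
    · refine Finset.sum_le_sum fun k hk => ?_
      have h1 : (⟨min k (n - 1), by omega⟩ : Fin n) ≤ ⟨min (k + 1) (n - 1), by omega⟩ := by
        simp only [Fin.mk_le_mk]
        omega
      have h2 : ((A.filter (fun i => k < i.val)).card : ℝ) ≤
          ((B.filter (fun i => k < i.val)).card : ℝ) := by
        exact_mod_cast hcard k (Finset.mem_range.mp hk)
      have := hmono h1
      nlinarith
  · intro h k
    have := h (fun i => if k ≤ i then 1 else 0) (fun i => by positivity)
      (by
        intro a b hab
        by_cases hka : k ≤ a
        · simp [hka, le_trans hka hab]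
        · by_cases hkb : k ≤ b <;> simp [hka, hkb])
    simp only [Finset.sum_ite, Finset.sum_const_zero, add_zero, Finset.sum_const,
      nsmul_eq_mul, mul_one] at this
    exact_mod_cast this
end
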